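/- Let G ≅ ⟨a | b⟩ be a ball with a, b and G numbers, and suppose that as values G − a = 1/2^p for some integer p ≥ 0. Then for every positive integer k, with −k taken in canonical form, G : (−k) = G − 1/2^p + 1/2^{p+k}. -/

import Mathlib

section CGTPort

-- Combinatorial game theory (`SetTheory.PGame`, `SetTheory.Game`, `powHalf`, `Numeric`) has
-- been removed from Mathlib; the notions used below are re-defined here with their old meaning.

universe u

namespace SetTheory

inductive PGame : Type (u + 1)
  | mk : ∀ α β : Type u, (α → PGame) → (β → PGame) → PGame

namespace PGame

def LeftMoves : PGame.{u} → Type u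
  | mk l _ _ _ => l

def RightMoves : PGame.{u} → Type u
  | mk _ r _ _ => r

def moveLeft : ∀ g : PGame.{u}, LeftMoves g → PGame.{u}
  | mk _ _ L _ => L

def moveRight : ∀ g : PGame.{u}, RightMoves g → PGame.{u}
  | mk _ _ _ R => R

-- `(x ≤ y, x ⧏ y)`, defined by simultaneous recursion (with `⧏` in its positive form).
noncomputable def leLf (x : PGame.{u}) : PGame.{u} → Prop × Prop :=
  PGame.rec (motive := fun _ => PGame.{u} → Prop × Prop)
    (fun _ _ _ _ IHL IHR y =>
      PGame.rec (motive := fun _ => Prop × Prop)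
        (fun yl yr yL yR JL JR =>
          ((∀ i, (IHL i (mk yl yr yL yR)).2) ∧ ∀ j, (JR j).2,
           (∃ i, (JL i).1) ∨ ∃ j, (IHR j (mk yl yr yL yR)).1))
        y) x

noncomputable instance : LE PGame.{u} := ⟨fun x y => (leLf x y).1⟩

def LF (x y : PGame.{u}) : Prop := (leLf x y).2

instance : LT PGame.{u} := ⟨fun x y => x ≤ y ∧ ¬ y ≤ x⟩

theorem le_iff (x y : PGame.{u}) :
    x ≤ y ↔ (∀ i, LF (x.moveLeft i) y) ∧ ∀ j, LF x (y.moveRight j) := by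
  cases x; cases y; exact Iff.rfl

theorem lf_iff (x y : PGame.{u}) :
    LF x y ↔ (∃ i, x ≤ y.moveLeft i) ∨ ∃ j, x.moveRight j ≤ y := by
  cases x; cases y; exact Iff.rfl

theorem pg_le_refl (x : PGame.{u}) : x ≤ x := by
  induction x with
  | mk xl xr xL xR ihL ihR =>
    exact (le_iff _ _).2 ⟨fun i => (lf_iff _ _).2 (Or.inl ⟨i, ihL i⟩),
      fun j => (lf_iff _ _).2 (Or.inr ⟨j, ihR j⟩)⟩

theorem le_trans_aux (x y z : PGame.{u}) :
    (x ≤ y → y ≤ z → x ≤ z) ∧ (LF x y → y ≤ z → LF x z) ∧ (x ≤ y → LF y z → LF x z) := by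
  induction x generalizing y z with
  | mk xl xr xL xR ihxL ihxR =>
  induction y generalizing z with
  | mk yl yr yL yR ihyL ihyR =>
  induction z with
  | mk zl zr zL zR ihzL ihzR =>
  refine ⟨fun hxy hyz => ?_, fun hxy hyz => ?_, fun hxy hyz => ?_⟩
  · exact (le_iff _ _).2 ⟨fun i => (ihxL i _ _).2.1 (((le_iff _ _).1 hxy).1 i) hyz,
      fun j => (ihzR j).2.2 hxy (((le_iff _ _).1 hyz).2 j)⟩
  · rcases (lf_iff _ _).1 hxy with ⟨i, h⟩ | ⟨j, h⟩
    · exact (ihyL i _).2.2 h (((le_iff _ _).1 hyz).1 i)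
    · exact (lf_iff _ _).2 (Or.inr ⟨j, (ihxR j _ _).1 h hyz⟩)
  · rcases (lf_iff _ _).1 hyz with ⟨k, h⟩ | ⟨j, h⟩
    · exact (lf_iff _ _).2 (Or.inl ⟨k, (ihzL k).1 hxy h⟩)
    · exact (ihyR j _).2.1 (((le_iff _ _).1 hxy).2 j) h

theorem pg_le_trans {x y z : PGame.{u}} (h1 : x ≤ y) (h2 : y ≤ z) : x ≤ z :=
  (le_trans_aux x y z).1 h1 h2

instance setoid : Setoid PGame.{u} :=
  ⟨fun x y => x ≤ y ∧ y ≤ x,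
    ⟨fun x => ⟨pg_le_refl x, pg_le_refl x⟩, fun h => ⟨h.2, h.1⟩,
      fun h1 h2 => ⟨pg_le_trans h1.1 h2.1, pg_le_trans h2.2 h1.2⟩⟩⟩

theorem equiv_def {x y : PGame.{u}} : x ≈ y ↔ x ≤ y ∧ y ≤ x := Iff.rfl

instance : Zero PGame.{u} := ⟨mk PEmpty PEmpty PEmpty.elim PEmpty.elim⟩

instance : One PGame.{u} := ⟨mk PUnit PEmpty (fun _ => 0) PEmpty.elim⟩

def neg : PGame.{u} → PGame.{u}
  | mk l r L R => mk r l (fun j => neg (R j)) (fun i => neg (L i))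

instance : Neg PGame.{u} := ⟨neg⟩

theorem neg_mk (l r : Type u) (L : l → PGame.{u}) (R : r → PGame.{u}) :
    -(mk l r L R) = mk r l (fun j => -(R j)) (fun i => -(L i)) := rfl

theorem neg_le_aux (x y : PGame.{u}) : (x ≤ y → -y ≤ -x) ∧ (LF x y → LF (-y) (-x)) := by
  induction x generalizing y with
  | mk xl xr xL xR ihxL ihxR =>
  induction y with
  | mk yl yr yL yR ihyL ihyR =>
  constructor
  · intro h
    rw [neg_mk, neg_mk]
    exact (le_iff _ _).2 ⟨fun i => (ihyR i).2 (((le_iff _ _).1 h).2 i),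
      fun j => (ihxL j _).2 (((le_iff _ _).1 h).1 j)⟩
  · intro h
    rw [neg_mk, neg_mk]
    rcases (lf_iff _ _).1 h with ⟨i, h'⟩ | ⟨j, h'⟩
    · exact (lf_iff _ _).2 (Or.inr ⟨i, (ihyL i).1 h'⟩)
    · exact (lf_iff _ _).2 (Or.inl ⟨j, (ihxR j _).1 h'⟩)

def addY (xl xr : Type u) (fL : xl → PGame.{u} → PGame.{u}) (fR : xr → PGame.{u} → PGame.{u}) :
    PGame.{u} → PGame.{u}
  | mk yl yr yL yR =>
    mk (xl ⊕ yl) (xr ⊕ yr) (Sum.elim (fun i => fL i (mk yl yr yL yR)) (fun j => addY xl xr fL fR (yL j)))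
      (Sum.elim (fun i => fR i (mk yl yr yL yR)) (fun j => addY xl xr fL fR (yR j)))

def add : PGame.{u} → PGame.{u} → PGame.{u}
  | mk xl xr xL xR => addY xl xr (fun i => add (xL i)) (fun i => add (xR i))

instance : Add PGame.{u} := ⟨add⟩

instance : Sub PGame.{u} := ⟨fun x y => x + -y⟩

theorem add_mk (xl xr : Type u) (xL : xl → PGame.{u}) (xR : xr → PGame.{u})
    (yl yr : Type u) (yL : yl → PGame.{u}) (yR : yr → PGame.{u}) :
    mk xl xr xL xR + mk yl yr yL yR =
      mk (xl ⊕ yl) (xr ⊕ yr)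
        (Sum.elim (fun i => xL i + mk yl yr yL yR) (fun j => mk xl xr xL xR + yL j))
        (Sum.elim (fun i => xR i + mk yl yr yL yR) (fun j => mk xl xr xL xR + yR j)) := rfl

theorem add_le_add_right_aux (y x x' : PGame.{u}) :
    (x ≤ x' → x + y ≤ x' + y) ∧ (LF x x' → LF (x + y) (x' + y)) := by
  induction y generalizing x x' with
  | mk yl yr yL yR ihyL ihyR =>
  induction x generalizing x' with
  | mk xl xr xL xR ihxL ihxR =>
  induction x' with
  | mk xl' xr' xL' xR' ihx'L ihx'R =>
  constructor
  · intro h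
    rw [add_mk, add_mk]
    refine (le_iff _ _).2 ⟨?_, ?_⟩
    · rintro (i | k)
      · exact (ihxL i _).2 (((le_iff _ _).1 h).1 i)
      · exact (lf_iff _ _).2 (Or.inl ⟨Sum.inr k, (ihyL k _ _).1 h⟩)
    · rintro (j | k)
      · exact (ihx'R j).2 (((le_iff _ _).1 h).2 j)
      · exact (lf_iff _ _).2 (Or.inr ⟨Sum.inr k, (ihyR k _ _).1 h⟩)
  · intro h
    rcases (lf_iff _ _).1 h with ⟨i, h'⟩ | ⟨j, h'⟩
    · rw [add_mk, add_mk]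
      exact (lf_iff _ _).2 (Or.inl ⟨Sum.inl i, (ihx'L i).1 h'⟩)
    · rw [add_mk, add_mk]
      exact (lf_iff _ _).2 (Or.inr ⟨Sum.inl j, (ihxR j _).1 h'⟩)

theorem add_le_add_left_aux (y x x' : PGame.{u}) :
    (x ≤ x' → y + x ≤ y + x') ∧ (LF x x' → LF (y + x) (y + x')) := by
  induction y generalizing x x' with
  | mk yl yr yL yR ihyL ihyR =>
  induction x generalizing x' with
  | mk xl xr xL xR ihxL ihxR =>
  induction x' with
  | mk xl' xr' xL' xR' ihx'L ihx'R =>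
  constructor
  · intro h
    rw [add_mk, add_mk]
    refine (le_iff _ _).2 ⟨?_, ?_⟩
    · rintro (k | i)
      · exact (lf_iff _ _).2 (Or.inl ⟨Sum.inl k, (ihyL k _ _).1 h⟩)
      · exact (ihxL i _).2 (((le_iff _ _).1 h).1 i)
    · rintro (k | j)
      · exact (lf_iff _ _).2 (Or.inr ⟨Sum.inl k, (ihyR k _ _).1 h⟩)
      · exact (ihx'R j).2 (((le_iff _ _).1 h).2 j)
  · intro h
    rcases (lf_iff _ _).1 h with ⟨i, h'⟩ | ⟨j, h'⟩
    · rw [add_mk, add_mk]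
      exact (lf_iff _ _).2 (Or.inl ⟨Sum.inr i, (ihx'L i).1 h'⟩)
    · rw [add_mk, add_mk]
      exact (lf_iff _ _).2 (Or.inr ⟨Sum.inr j, (ihxR j _).1 h'⟩)

theorem add_le_add' {x x' y y' : PGame.{u}} (h1 : x ≤ x') (h2 : y ≤ y') : x + y ≤ x' + y' :=
  pg_le_trans ((add_le_add_right_aux y x x').1 h1) ((add_le_add_left_aux x' y y').1 h2)

def Numeric : PGame.{u} → Prop
  | ⟨_, _, L, R⟩ => (∀ i j, L i < R j) ∧ (∀ i, Numeric (L i)) ∧ ∀ j, Numeric (R j)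

def powHalf : ℕ → PGame.{u}
  | 0 => 1
  | n + 1 => ⟨PUnit, PUnit, fun _ => 0, fun _ => powHalf n⟩

end PGame

abbrev Game : Type (u + 1) := Quotient PGame.setoid.{u}

namespace Game

instance : Zero Game.{u} := ⟨⟦0⟧⟩

instance : Neg Game.{u} :=
  ⟨Quotient.map Neg.neg fun x y h =>
    PGame.equiv_def.2 ⟨(PGame.neg_le_aux y x).1 (PGame.equiv_def.1 h).2,
      (PGame.neg_le_aux x y).1 (PGame.equiv_def.1 h).1⟩⟩

instance : Add Game.{u} :=
  ⟨Quotient.map₂ (· + ·) fun _ _ hx _ _ hy =>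
    PGame.equiv_def.2 ⟨PGame.add_le_add' (PGame.equiv_def.1 hx).1 (PGame.equiv_def.1 hy).1,
      PGame.add_le_add' (PGame.equiv_def.1 hx).2 (PGame.equiv_def.1 hy).2⟩⟩

instance : Sub Game.{u} := ⟨fun a b => a + -b⟩

instance : SMul ℤ Game.{u} := ⟨fun n g => zsmulRec nsmulRec n g⟩

end Game

end SetTheory

end CGTPort

open SetTheory PGame

universe u

/-- Ordinal sum `G : H`: players may move in the base `G` (ending all play in the
subordinate) or in the subordinate `H`. -/
def ordinalSum (G : PGame.{u}) : PGame.{u} → PGame.{u}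
  | ⟨yl, yr, yL, yR⟩ =>
    ⟨G.LeftMoves ⊕ yl, G.RightMoves ⊕ yr,
     Sum.elim G.moveLeft fun j => ordinalSum G (yL j),
     Sum.elim G.moveRight fun j => ordinalSum G (yR j)⟩

/-- `G ≜ H`: equivalence modulo domination.  Every Left option of `G` is `≤` some Left
option of `H`, every Left option of `H` is `≤` some Left option of `G`, every Right option
of `G` is `≥` some Right option of `H`, and every Right option of `H` is `≥` some Right
option of `G`. -/
def EquivDom (G H : PGame) : Prop :=
  (∀ i, ∃ j, G.moveLeft i ≤ H.moveLeft j) ∧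
  (∀ j, ∃ i, H.moveLeft j ≤ G.moveLeft i) ∧
  (∀ i, ∃ j, H.moveRight j ≤ G.moveRight i) ∧
  (∀ j, ∃ i, G.moveRight i ≤ H.moveRight j)

/-- The ball `⟨a | b⟩`: the game with exactly one Left option `a` and exactly one Right
option `b`. -/
def ball (a b : PGame.{u}) : PGame.{u} :=
  ⟨PUnit, PUnit, fun _ => a, fun _ => b⟩

/-- The canonical form of a natural number: `0 ≅ ⟨ | ⟩` and `n+1 ≅ ⟨n | ⟩`. -/
def canonNat : ℕ → PGame
  | 0 => 0
  | n + 1 => ⟨PUnit, PEmpty, fun _ => canonNat n, PEmpty.elim⟩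

/-- The canonical form of an integer: for `n ≥ 0` it is `canonNat n`, and the canonical
form of a negative integer is the negative of the canonical form of its absolute value. -/
def canonInt (n : ℤ) : PGame :=
  if 0 ≤ n then canonNat n.toNat else -canonNat (-n).toNat

/-- The game value of the dyadic rational `a / 2 ^ q`. -/
def dyadicVal (a : ℤ) (q : ℕ) : Game :=
  a • (⟦powHalf q⟧ : Game)

namespace SetTheory

namespace PGame

infix:50 " ⧏ " => LF

theorem lt_def' {x y : PGame.{u}} : x < y ↔ x ≤ y ∧ ¬ y ≤ x := Iff.rfl

theorem le_of_forall_lf {x y : PGame.{u}} (h1 : ∀ i, x.moveLeft i ⧏ y)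
    (h2 : ∀ j, x ⧏ y.moveRight j) : x ≤ y :=
  (le_iff x y).2 ⟨h1, h2⟩

theorem moveLeft_lf {x : PGame.{u}} (i : x.LeftMoves) : x.moveLeft i ⧏ x :=
  ((le_iff x x).1 (pg_le_refl x)).1 i

theorem lf_moveRight {x : PGame.{u}} (j : x.RightMoves) : x ⧏ x.moveRight j :=
  ((le_iff x x).1 (pg_le_refl x)).2 j

theorem lf_of_moveRight_le {x y : PGame.{u}} {j : x.RightMoves} (h : x.moveRight j ≤ y) :
    x ⧏ y :=
  (lf_iff x y).2 (Or.inr ⟨j, h⟩)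

theorem lf_of_le_moveLeft {x y : PGame.{u}} {i : y.LeftMoves} (h : x ≤ y.moveLeft i) :
    x ⧏ y :=
  (lf_iff x y).2 (Or.inl ⟨i, h⟩)

theorem not_le_aux (x y : PGame.{u}) : (¬ x ≤ y ↔ y ⧏ x) ∧ (¬ x ⧏ y ↔ y ≤ x) := by
  induction x generalizing y with
  | mk xl xr xL xR ihxL ihxR =>
  induction y with
  | mk yl yr yL yR ihyL ihyR =>
  constructor
  · refine (not_congr (le_iff _ _)).trans (Iff.trans ?_ (lf_iff _ _).symm)
    simp only [not_and_or, not_forall]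
    exact or_congr (exists_congr fun i => (ihxL i _).2) (exists_congr fun j => (ihyR j).2)
  · refine (not_congr (lf_iff _ _)).trans (Iff.trans ?_ (le_iff _ _).symm)
    simp only [not_or, not_exists]
    exact and_congr (forall_congr' fun i => (ihyL i).1) (forall_congr' fun j => (ihxR j _).1)

theorem not_le {x y : PGame.{u}} : ¬ x ≤ y ↔ y ⧏ x := (not_le_aux x y).1

theorem not_lf {x y : PGame.{u}} : ¬ x ⧏ y ↔ y ≤ x := (not_le_aux x y).2

theorem lf_irrefl (x : PGame.{u}) : ¬ x ⧏ x := not_lf.2 (pg_le_refl x)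

theorem lf_of_lt {x y : PGame.{u}} (h : x < y) : x ⧏ y := not_le.1 (lt_def'.1 h).2

theorem lf_of_lf_of_le {x y z : PGame.{u}} (h1 : x ⧏ y) (h2 : y ≤ z) : x ⧏ z :=
  (le_trans_aux x y z).2.1 h1 h2

theorem lf_of_le_of_lf {x y z : PGame.{u}} (h1 : x ≤ y) (h2 : y ⧏ z) : x ⧏ z :=
  (le_trans_aux x y z).2.2 h1 h2

noncomputable instance : Preorder PGame.{u} where
  le := fun x y => x ≤ y
  lt := fun x y => x < y
  le_refl := pg_le_refl
  le_trans := fun _ _ _ => pg_le_trans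
  lt_iff_le_not_ge := fun _ _ => Iff.rfl

theorem numeric_def {x : PGame.{u}} : x.Numeric ↔ (∀ i j, x.moveLeft i < x.moveRight j) ∧
    (∀ i, (x.moveLeft i).Numeric) ∧ ∀ j, (x.moveRight j).Numeric := by
  cases x; exact Iff.rfl

theorem Numeric.mk {x : PGame.{u}} (h1 : ∀ i j, x.moveLeft i < x.moveRight j)
    (h2 : ∀ i, (x.moveLeft i).Numeric) (h3 : ∀ j, (x.moveRight j).Numeric) : x.Numeric :=
  numeric_def.2 ⟨h1, h2, h3⟩

theorem Numeric.left_lt_right {x : PGame.{u}} (o : x.Numeric) (i : x.LeftMoves)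
    (j : x.RightMoves) : x.moveLeft i < x.moveRight j := (numeric_def.1 o).1 i j

theorem Numeric.moveLeft {x : PGame.{u}} (o : x.Numeric) (i : x.LeftMoves) :
    (x.moveLeft i).Numeric := (numeric_def.1 o).2.1 i

theorem Numeric.moveRight {x : PGame.{u}} (o : x.Numeric) (j : x.RightMoves) :
    (x.moveRight j).Numeric := (numeric_def.1 o).2.2 j

theorem numeric_zero : (0 : PGame.{u}).Numeric :=
  numeric_def.2 ⟨fun i => PEmpty.elim i, fun i => PEmpty.elim i, fun j => PEmpty.elim j⟩

theorem lf_asymm_aux (x : PGame.{u}) :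
    ∀ y : PGame.{u}, x.Numeric → y.Numeric → x ⧏ y → ¬ y ⧏ x := by
  induction x with
  | mk xl xr xL xR ihxL ihxR =>
  intro y ox oy h1 h2
  rcases (lf_iff _ _).1 h1 with ⟨i, h₁⟩ | ⟨j, h₁⟩ <;>
    rcases (lf_iff _ _).1 h2 with ⟨i', h₂⟩ | ⟨j', h₂⟩
  · exact ihxL i' _ (ox.moveLeft i') (oy.moveLeft i) (lf_of_lf_of_le (moveLeft_lf i') h₁)
      (lf_of_lf_of_le (moveLeft_lf i) h₂)
  · exact lf_irrefl _ (lf_of_lf_of_le (lf_of_lt (oy.left_lt_right i j')) (pg_le_trans h₂ h₁))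
  · exact lf_irrefl _ (lf_of_lf_of_le (lf_of_lt (ox.left_lt_right i' j)) (pg_le_trans h₁ h₂))
  · exact ihxR j _ (ox.moveRight j) (oy.moveRight j') (lf_of_le_of_lf h₁ (lf_moveRight j'))
      (lf_of_le_of_lf h₂ (lf_moveRight j))

theorem lf_iff_lt {x y : PGame.{u}} (ox : x.Numeric) (oy : y.Numeric) : x ⧏ y ↔ x < y :=
  ⟨fun h => lt_def'.2 ⟨not_lf.1 (lf_asymm_aux x y ox oy h), not_le.2 h⟩, lf_of_lt⟩

theorem Numeric.moveLeft_lt {x : PGame.{u}} (o : x.Numeric) (i : x.LeftMoves) :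
    x.moveLeft i < x :=
  (lf_iff_lt (o.moveLeft i) o).1 (moveLeft_lf i)

theorem Numeric.lt_moveRight {x : PGame.{u}} (o : x.Numeric) (j : x.RightMoves) :
    x < x.moveRight j :=
  (lf_iff_lt o (o.moveRight j)).1 (lf_moveRight j)

theorem equiv_of_exists {x y : PGame.{u}}
    (hl₁ : ∀ i, ∃ j, x.moveLeft i ≈ y.moveLeft j) (hr₁ : ∀ i, ∃ j, x.moveRight i ≈ y.moveRight j)
    (hl₂ : ∀ j, ∃ i, x.moveLeft i ≈ y.moveLeft j) (hr₂ : ∀ j, ∃ i, x.moveRight i ≈ y.moveRight j) :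
    x ≈ y := by
  refine equiv_def.2 ⟨le_of_forall_lf (fun i => ?_) (fun j => ?_),
    le_of_forall_lf (fun j => ?_) (fun i => ?_)⟩
  · obtain ⟨j, h⟩ := hl₁ i; exact lf_of_le_moveLeft (equiv_def.1 h).1
  · obtain ⟨i, h⟩ := hr₂ j; exact lf_of_moveRight_le (equiv_def.1 h).1
  · obtain ⟨i, h⟩ := hl₂ j; exact lf_of_le_moveLeft (equiv_def.1 h).2
  · obtain ⟨j, h⟩ := hr₁ i; exact lf_of_moveRight_le (equiv_def.1 h).2

theorem add_comm_equiv (x y : PGame.{u}) : x + y ≈ y + x := by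
  induction x generalizing y with
  | mk xl xr xL xR ihxL ihxR =>
  induction y with
  | mk yl yr yL yR ihyL ihyR =>
  refine equiv_of_exists ?_ ?_ ?_ ?_
  · rintro (i | j)
    · exact ⟨Sum.inr i, ihxL i _⟩
    · exact ⟨Sum.inl j, ihyL j⟩
  · rintro (i | j)
    · exact ⟨Sum.inr i, ihxR i _⟩
    · exact ⟨Sum.inl j, ihyR j⟩
  · rintro (j | i)
    · exact ⟨Sum.inr j, ihyL j⟩
    · exact ⟨Sum.inl i, ihxL i _⟩
  · rintro (j | i)
    · exact ⟨Sum.inr j, ihyR j⟩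
    · exact ⟨Sum.inl i, ihxR i _⟩

theorem add_assoc_equiv (x y z : PGame.{u}) : x + y + z ≈ x + (y + z) := by
  induction x generalizing y z with
  | mk xl xr xL xR ihxL ihxR =>
  induction y generalizing z with
  | mk yl yr yL yR ihyL ihyR =>
  induction z with
  | mk zl zr zL zR ihzL ihzR =>
  refine equiv_of_exists ?_ ?_ ?_ ?_
  · rintro ((i | j) | k)
    · exact ⟨Sum.inl i, ihxL i _ _⟩
    · exact ⟨Sum.inr (Sum.inl j), ihyL j _⟩
    · exact ⟨Sum.inr (Sum.inr k), ihzL k⟩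
  · rintro ((i | j) | k)
    · exact ⟨Sum.inl i, ihxR i _ _⟩
    · exact ⟨Sum.inr (Sum.inl j), ihyR j _⟩
    · exact ⟨Sum.inr (Sum.inr k), ihzR k⟩
  · rintro (i | (j | k))
    · exact ⟨Sum.inl (Sum.inl i), ihxL i _ _⟩
    · exact ⟨Sum.inl (Sum.inr j), ihyL j _⟩
    · exact ⟨Sum.inr k, ihzL k⟩
  · rintro (i | (j | k))
    · exact ⟨Sum.inl (Sum.inl i), ihxR i _ _⟩
    · exact ⟨Sum.inl (Sum.inr j), ihyR j _⟩
    · exact ⟨Sum.inr k, ihzR k⟩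

theorem zero_add_equiv (x : PGame.{u}) : 0 + x ≈ x := by
  induction x with
  | mk xl xr xL xR ihL ihR =>
  refine equiv_of_exists ?_ ?_ ?_ ?_
  · rintro (i | i)
    · exact PEmpty.elim i
    · exact ⟨i, ihL i⟩
  · rintro (i | i)
    · exact PEmpty.elim i
    · exact ⟨i, ihR i⟩
  · intro j; exact ⟨Sum.inr j, ihL j⟩
  · intro j; exact ⟨Sum.inr j, ihR j⟩

theorem add_zero_equiv (x : PGame.{u}) : x + 0 ≈ x :=
  Setoid.trans (add_comm_equiv x 0) (zero_add_equiv x)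

def toLeftMovesAdd {x y : PGame.{u}} : x.LeftMoves ⊕ y.LeftMoves ≃ (x + y).LeftMoves := by
  cases x; cases y; exact Equiv.refl _

def toRightMovesAdd {x y : PGame.{u}} : x.RightMoves ⊕ y.RightMoves ≃ (x + y).RightMoves := by
  cases x; cases y; exact Equiv.refl _

theorem add_moveLeft_inl {x y : PGame.{u}} (i : x.LeftMoves) :
    (x + y).moveLeft (toLeftMovesAdd (Sum.inl i)) = x.moveLeft i + y := by
  cases x; cases y; rfl

theorem add_moveLeft_inr {x y : PGame.{u}} (i : y.LeftMoves) :
    (x + y).moveLeft (toLeftMovesAdd (Sum.inr i)) = x + y.moveLeft i := by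
  cases x; cases y; rfl

theorem add_moveRight_inl {x y : PGame.{u}} (i : x.RightMoves) :
    (x + y).moveRight (toRightMovesAdd (Sum.inl i)) = x.moveRight i + y := by
  cases x; cases y; rfl

theorem add_moveRight_inr {x y : PGame.{u}} (i : y.RightMoves) :
    (x + y).moveRight (toRightMovesAdd (Sum.inr i)) = x + y.moveRight i := by
  cases x; cases y; rfl

@[elab_as_elim]
theorem leftMoves_add_cases {x y : PGame.{u}} (k : (x + y).LeftMoves)
    {P : (x + y).LeftMoves → Prop} (hl : ∀ i, P (toLeftMovesAdd (Sum.inl i)))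
    (hr : ∀ i, P (toLeftMovesAdd (Sum.inr i))) : P k := by
  rw [← toLeftMovesAdd.apply_symm_apply k]
  rcases toLeftMovesAdd.symm k with i | i
  · exact hl i
  · exact hr i

@[elab_as_elim]
theorem rightMoves_add_cases {x y : PGame.{u}} (k : (x + y).RightMoves)
    {P : (x + y).RightMoves → Prop} (hl : ∀ i, P (toRightMovesAdd (Sum.inl i)))
    (hr : ∀ i, P (toRightMovesAdd (Sum.inr i))) : P k := by
  rw [← toRightMovesAdd.apply_symm_apply k]
  rcases toRightMovesAdd.symm k with i | i
  · exact hl i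
  · exact hr i

theorem neg_add_cancel_equiv (x : PGame.{u}) : -x + x ≈ 0 := by
  induction x with
  | mk xl xr xL xR ihL ihR =>
  refine equiv_def.2 ⟨le_of_forall_lf ?_ (fun j => PEmpty.elim j),
    le_of_forall_lf (fun i => PEmpty.elim i) ?_⟩
  · rintro (i | i)
    · show -(xR i) + mk xl xr xL xR ⧏ 0
      exact lf_of_moveRight_le (j := toRightMovesAdd (Sum.inr i))
        ((add_moveRight_inr (x := -(xR i)) (y := mk xl xr xL xR) i).trans_le
          (equiv_def.1 (ihR i)).1)
    · show -(mk xl xr xL xR) + xL i ⧏ 0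
      exact lf_of_moveRight_le (j := toRightMovesAdd (Sum.inl i))
        ((add_moveRight_inl (x := -(mk xl xr xL xR)) (y := xL i) i).trans_le
          (equiv_def.1 (ihL i)).1)
  · rintro (i | i)
    · show 0 ⧏ -(xL i) + mk xl xr xL xR
      exact lf_of_le_moveLeft (i := toLeftMovesAdd (Sum.inr i))
        ((equiv_def.1 (ihL i)).2.trans_eq
          (add_moveLeft_inr (x := -(xL i)) (y := mk xl xr xL xR) i).symm)
    · show 0 ⧏ -(mk xl xr xL xR) + xR i
      exact lf_of_le_moveLeft (i := toLeftMovesAdd (Sum.inl i))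
        ((equiv_def.1 (ihR i)).2.trans_eq
          (add_moveLeft_inl (x := -(mk xl xr xL xR)) (y := xR i) i).symm)

theorem neg_neg' (x : PGame.{u}) : -(-x) = x := by
  induction x with
  | mk xl xr xL xR ihL ihR => rw [neg_mk, neg_mk]; simp only [ihL, ihR]

theorem neg_le_neg_iff' {x y : PGame.{u}} : -y ≤ -x ↔ x ≤ y :=
  ⟨fun h => by have := (neg_le_aux _ _).1 h; rwa [neg_neg', neg_neg'] at this,
    (neg_le_aux x y).1⟩

theorem neg_lt' {x y : PGame.{u}} (h : x < y) : -y < -x :=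
  lt_def'.2 ⟨(neg_le_aux x y).1 (lt_def'.1 h).1,
    fun h' => (lt_def'.1 h).2 (neg_le_neg_iff'.1 h')⟩

theorem Numeric.neg {x : PGame.{u}} (o : x.Numeric) : (-x).Numeric := by
  induction x with
  | mk xl xr xL xR ihL ihR =>
  rw [neg_mk]
  exact numeric_def.2 ⟨fun i j => neg_lt' (o.left_lt_right j i),
    fun i => ihR i (o.moveRight i), fun j => ihL j (o.moveLeft j)⟩

end PGame

namespace Game

noncomputable instance instLEGame : LE Game.{u} :=
  ⟨Quotient.lift₂ (fun x y : PGame.{u} => x ≤ y) (fun x₁ y₁ x₂ y₂ hx hy => propext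
    ⟨fun h => pg_le_trans (PGame.equiv_def.1 hx).2 (pg_le_trans h (PGame.equiv_def.1 hy).1),
     fun h => pg_le_trans (PGame.equiv_def.1 hx).1 (pg_le_trans h (PGame.equiv_def.1 hy).2)⟩)⟩

noncomputable instance instPreorderGame : Preorder Game.{u} where
  le := fun a b => a ≤ b
  lt := fun a b => a ≤ b ∧ ¬ b ≤ a
  lt_iff_le_not_ge := fun _ _ => Iff.rfl
  le_refl := by rintro ⟨x⟩; exact PGame.pg_le_refl x
  le_trans := by rintro ⟨x⟩ ⟨y⟩ ⟨z⟩ h1 h2; exact PGame.pg_le_trans h1 h2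

noncomputable instance instPartialOrderGame : PartialOrder Game.{u} where
  toPreorder := instPreorderGame
  le_antisymm := by rintro ⟨x⟩ ⟨y⟩ h1 h2; exact Quot.sound (PGame.equiv_def.2 ⟨h1, h2⟩)

instance instAddCommGroupGame : AddCommGroup Game.{u} where
  add := fun a b => a + b
  zero := (0 : Game.{u})
  neg := fun a => -a
  sub := fun a b => a - b
  sub_eq_add_neg := fun _ _ => rfl
  add_assoc := by rintro ⟨x⟩ ⟨y⟩ ⟨z⟩; exact Quot.sound (PGame.add_assoc_equiv x y z)
  zero_add := by rintro ⟨x⟩; exact Quot.sound (PGame.zero_add_equiv x)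
  add_zero := by rintro ⟨x⟩; exact Quot.sound (PGame.add_zero_equiv x)
  add_comm := by rintro ⟨x⟩ ⟨y⟩; exact Quot.sound (PGame.add_comm_equiv x y)
  neg_add_cancel := by rintro ⟨x⟩; exact Quot.sound (PGame.neg_add_cancel_equiv x)
  nsmul := nsmulRec
  zsmul := zsmulRec nsmulRec

instance instIsOrderedAddMonoidGame : IsOrderedAddMonoid Game.{u} where
  add_le_add_left := by
    rintro ⟨x⟩ ⟨y⟩ h ⟨z⟩
    exact PGame.add_le_add' (x := x) (x' := y) h (PGame.pg_le_refl z)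

end Game

namespace PGame

theorem lt_iff_game_lt {x y : PGame.{u}} : x < y ↔ (⟦x⟧ : Game) < ⟦y⟧ := Iff.rfl

theorem le_iff_game_le {x y : PGame.{u}} : x ≤ y ↔ (⟦x⟧ : Game) ≤ ⟦y⟧ := Iff.rfl

theorem game_eq {x y : PGame.{u}} (h : x ≈ y) : (⟦x⟧ : Game) = ⟦y⟧ := Quotient.sound h

@[simp] theorem quot_zero : (⟦(0 : PGame.{u})⟧ : Game) = 0 := rfl

@[simp] theorem quot_add (x y : PGame.{u}) : (⟦x + y⟧ : Game) = ⟦x⟧ + ⟦y⟧ := rfl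

@[simp] theorem quot_neg (x : PGame.{u}) : (⟦-x⟧ : Game) = -⟦x⟧ := rfl

theorem numeric_add_aux : ∀ (x y : PGame.{u}), x.Numeric → y.Numeric → (x + y).Numeric := by
  intro x
  induction x with
  | mk xl xr xL xR ihxL ihxR =>
  intro y
  induction y with
  | mk yl yr yL yR ihyL ihyR =>
  intro ox oy
  have hxl : ∀ i, (⟦xL i⟧ : Game) < ⟦mk xl xr xL xR⟧ := fun i => lt_iff_game_lt.1 (ox.moveLeft_lt i)
  have hxr : ∀ j, (⟦mk xl xr xL xR⟧ : Game) < ⟦xR j⟧ := fun j => lt_iff_game_lt.1 (ox.lt_moveRight j)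
  have hyl : ∀ i, (⟦yL i⟧ : Game) < ⟦mk yl yr yL yR⟧ := fun i => lt_iff_game_lt.1 (oy.moveLeft_lt i)
  have hyr : ∀ j, (⟦mk yl yr yL yR⟧ : Game) < ⟦yR j⟧ := fun j => lt_iff_game_lt.1 (oy.lt_moveRight j)
  refine numeric_def.2 ⟨?_, ?_, ?_⟩
  · rintro (i | i) (j | j) <;> apply lt_iff_game_lt.2
    · show (⟦xL i⟧ : Game) + ⟦mk yl yr yL yR⟧ < ⟦xR j⟧ + ⟦mk yl yr yL yR⟧
      exact add_lt_add_of_lt_of_le ((hxl i).trans (hxr j)) le_rfl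
    · show (⟦xL i⟧ : Game) + ⟦mk yl yr yL yR⟧ < ⟦mk xl xr xL xR⟧ + ⟦yR j⟧
      exact add_lt_add (hxl i) (hyr j)
    · show (⟦mk xl xr xL xR⟧ : Game) + ⟦yL i⟧ < ⟦xR j⟧ + ⟦mk yl yr yL yR⟧
      exact add_lt_add (hxr j) (hyl i)
    · show (⟦mk xl xr xL xR⟧ : Game) + ⟦yL i⟧ < ⟦mk xl xr xL xR⟧ + ⟦yR j⟧
      exact add_lt_add_of_le_of_lt le_rfl ((hyl i).trans (hyr j))
  · rintro (i | i)
    · exact ihxL i _ (ox.moveLeft i) oy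
    · exact ihyL i ox (oy.moveLeft i)
  · rintro (j | j)
    · exact ihxR j _ (ox.moveRight j) oy
    · exact ihyR j ox (oy.moveRight j)

theorem Numeric.add {x y : PGame.{u}} (ox : x.Numeric) (oy : y.Numeric) : (x + y).Numeric :=
  numeric_add_aux x y ox oy

noncomputable def birthday : PGame.{u} → Ordinal.{u}
  | ⟨_, _, xL, xR⟩ =>
    max (Ordinal.lsub.{u, u} fun i => birthday (xL i)) (Ordinal.lsub.{u, u} fun i => birthday (xR i))

theorem birthday_moveLeft_lt {x : PGame.{u}} (i : x.LeftMoves) :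
    (x.moveLeft i).birthday < x.birthday := by
  cases x
  exact lt_max_of_lt_left (Ordinal.lt_lsub.{u, u} _ i)

theorem birthday_moveRight_lt {x : PGame.{u}} (i : x.RightMoves) :
    (x.moveRight i).birthday < x.birthday := by
  cases x
  exact lt_max_of_lt_right (Ordinal.lt_lsub.{u, u} _ i)

def toLeftMovesNeg {x : PGame.{u}} : x.RightMoves ≃ (-x).LeftMoves := by
  cases x; exact Equiv.refl _

def toRightMovesNeg {x : PGame.{u}} : x.LeftMoves ≃ (-x).RightMoves := by
  cases x; exact Equiv.refl _

theorem moveLeft_neg' {x : PGame.{u}} (i : (-x).LeftMoves) :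
    (-x).moveLeft i = -x.moveRight (toLeftMovesNeg.symm i) := by
  cases x; rfl

theorem moveRight_neg' {x : PGame.{u}} (i : (-x).RightMoves) :
    (-x).moveRight i = -x.moveLeft (toRightMovesNeg.symm i) := by
  cases x; rfl

theorem powHalf_moveLeft (n : ℕ) (i : (powHalf.{u} n).LeftMoves) :
    (powHalf.{u} n).moveLeft i = 0 := by
  cases n <;> rfl

theorem powHalf_succ_moveRight (n : ℕ) (i : (powHalf.{u} (n + 1)).RightMoves) :
    (powHalf.{u} (n + 1)).moveRight i = powHalf n := rfl

def powHalfLeft (n : ℕ) : (powHalf.{u} n).LeftMoves := by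
  cases n <;> exact PUnit.unit

theorem zero_lf_powHalf (n : ℕ) : (0 : PGame.{u}) ⧏ powHalf n :=
  lf_of_le_moveLeft (i := powHalfLeft n) (by rw [powHalf_moveLeft])

theorem zero_le_powHalf (n : ℕ) : (0 : PGame.{u}) ≤ powHalf n := by
  refine le_of_forall_lf (fun i => PEmpty.elim i) (fun j => ?_)
  cases n with
  | zero => exact PEmpty.elim j
  | succ n => exact zero_lf_powHalf n

theorem powHalf_pos (n : ℕ) : (0 : PGame.{u}) < powHalf n :=
  lt_def'.2 ⟨zero_le_powHalf n, fun h => lf_irrefl 0 (lf_of_lf_of_le (zero_lf_powHalf n) h)⟩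

theorem numeric_powHalf (n : ℕ) : (powHalf.{u} n).Numeric := by
  induction n with
  | zero => exact numeric_def.2 ⟨fun _ j => PEmpty.elim j, fun _ => numeric_zero,
      fun j => PEmpty.elim j⟩
  | succ n ih => exact numeric_def.2 ⟨fun _ _ => powHalf_pos n, fun _ => numeric_zero,
      fun _ => ih⟩

theorem powHalf_succ_lt_powHalf (n : ℕ) : powHalf.{u} (n + 1) < powHalf n :=
  (lf_iff_lt (numeric_powHalf _) (numeric_powHalf _)).1
    (lf_of_moveRight_le (j := PUnit.unit) (pg_le_refl _))

theorem powHalf_succ_le_powHalf (n : ℕ) : powHalf.{u} (n + 1) ≤ powHalf n :=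
  (lt_def'.1 (powHalf_succ_lt_powHalf n)).1

theorem powHalf_game_step (n : ℕ)
    (H : ∀ j : (powHalf.{u} n).RightMoves,
      powHalf (n + 1) + powHalf (n + 1) ⧏ (powHalf n).moveRight j) :
    (⟦powHalf.{u} (n + 1) + powHalf (n + 1)⟧ : Game) = ⟦powHalf n⟧ := by
  have hpos : ∀ m, (0 : Game.{u}) < ⟦powHalf m⟧ := fun m => lt_iff_game_lt.1 (powHalf_pos m)
  have hlt : ∀ m, (⟦powHalf.{u} (m + 1)⟧ : Game) < ⟦powHalf m⟧ :=
    fun m => lt_iff_game_lt.1 (powHalf_succ_lt_powHalf m)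
  apply le_antisymm
  · show powHalf (n + 1) + powHalf (n + 1) ≤ powHalf n
    refine le_of_forall_lf ?_ H
    rintro (i | i) <;> apply lf_of_lt <;> apply lt_iff_game_lt.2
    · show (⟦0⟧ : Game) + ⟦powHalf (n + 1)⟧ < ⟦powHalf n⟧
      rw [quot_zero, zero_add]; exact hlt n
    · show (⟦powHalf (n + 1)⟧ : Game) + ⟦0⟧ < ⟦powHalf n⟧
      rw [quot_zero, add_zero]; exact hlt n
  · show powHalf n ≤ powHalf (n + 1) + powHalf (n + 1)
    refine le_of_forall_lf ?_ ?_
    · intro i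
      rw [powHalf_moveLeft]
      apply lf_of_lt
      apply lt_iff_game_lt.2
      rw [quot_zero, quot_add]
      exact add_pos (hpos _) (hpos _)
    · rintro (j | j) <;> apply lf_of_lt <;> apply lt_iff_game_lt.2
      · show (⟦powHalf n⟧ : Game) < ⟦powHalf n⟧ + ⟦powHalf (n + 1)⟧
        exact lt_add_of_pos_right _ (hpos _)
      · show (⟦powHalf n⟧ : Game) < ⟦powHalf (n + 1)⟧ + ⟦powHalf n⟧
        exact lt_add_of_pos_left _ (hpos _)

theorem powHalf_game (n : ℕ) :
    (⟦powHalf.{u} (n + 1) + powHalf (n + 1)⟧ : Game) = ⟦powHalf n⟧ := by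
  induction n with
  | zero => exact powHalf_game_step 0 (fun j => PEmpty.elim j)
  | succ n ih =>
    refine powHalf_game_step (n + 1) (fun j => ?_)
    show powHalf (n + 1 + 1) + powHalf (n + 1 + 1) ⧏ powHalf n
    refine lf_of_moveRight_le (j := toRightMovesAdd (Sum.inl PUnit.unit)) ?_
    refine (add_moveRight_inl (x := powHalf (n + 1 + 1)) (y := powHalf (n + 1 + 1))
      PUnit.unit).trans_le ?_
    show powHalf (n + 1) + powHalf (n + 1 + 1) ≤ powHalf n
    apply le_iff_game_le.2
    rw [quot_add, ← ih, quot_add]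
    exact add_le_add le_rfl (le_iff_game_le.1 (powHalf_succ_le_powHalf (n + 1)))

theorem add_powHalf_succ_self_eq_powHalf (n : ℕ) :
    powHalf.{u} (n + 1) + powHalf (n + 1) ≈ powHalf n :=
  Quotient.exact (powHalf_game n)

end PGame

end SetTheory

namespace OrdSumAux

open SetTheory PGame

/-! ### Basic bridges between `PGame` order and `Game` order -/

theorem glt {x y : PGame.{u}} (h : (⟦x⟧ : Game) < ⟦y⟧) : x ⧏ y :=
  lf_of_lt (PGame.lt_iff_game_lt.2 h)

theorem gle {x y : PGame.{u}} (h : (⟦x⟧ : Game) ≤ ⟦y⟧) : x ≤ y :=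
  PGame.le_iff_game_le.2 h

theorem game_lt_of_not_le {x y : PGame.{u}} (ox : x.Numeric) (oy : y.Numeric)
    (h : ¬(⟦y⟧ : Game) ≤ ⟦x⟧) : (⟦x⟧ : Game) < ⟦y⟧ := by
  have h' : ¬ y ≤ x := fun hle => h (PGame.le_iff_game_le.1 hle)
  exact PGame.lt_iff_game_lt.1 ((PGame.lf_iff_lt ox oy).1 (PGame.not_le.1 h'))

/-- linearity of values of numeric games -/
theorem game_lt_or_le {x y : PGame.{u}} (ox : x.Numeric) (oy : y.Numeric) :
    (⟦x⟧ : Game) < ⟦y⟧ ∨ (⟦y⟧ : Game) ≤ ⟦x⟧ := by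
  by_cases h : (⟦y⟧ : Game) ≤ ⟦x⟧
  · exact Or.inr h
  · exact Or.inl (game_lt_of_not_le ox oy h)

theorem crossLe {x y : PGame.{u}}
    (hL : ∀ i, (⟦x.moveLeft i⟧ : Game) < ⟦y⟧)
    (hR : ∀ j, (⟦x⟧ : Game) < ⟦y.moveRight j⟧) : x ≤ y :=
  le_of_forall_lf (fun i => glt (hL i)) (fun j => glt (hR j))

/-! ### minimal-birthday choice -/

theorem exists_min_bd (P : PGame.{u} → Prop) (hP : ∃ x, P x) :
    ∃ m, P m ∧ ∀ y, P y → m.birthday ≤ y.birthday := by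
  obtain ⟨x, hx⟩ := hP
  have hne : {o : Ordinal.{u} | ∃ z : PGame.{u}, P z ∧ z.birthday = o}.Nonempty :=
    ⟨x.birthday, x, hx, rfl⟩
  obtain ⟨m, hm, hmb⟩ := csInf_mem hne
  refine ⟨m, hm, fun y hy => ?_⟩
  rw [hmb]
  exact csInf_le' ⟨y, hy, rfl⟩

/-! ### powHalf facts at the `Game` level -/

theorem quot_powHalf_pos (q : ℕ) : (0 : Game) < ⟦powHalf q⟧ := by
  have := PGame.lt_iff_game_lt.1 (powHalf_pos q)
  simpa using this

theorem quot_powHalf_add_self (q : ℕ) :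
    (⟦powHalf (q + 1)⟧ : Game) + ⟦powHalf (q + 1)⟧ = ⟦powHalf q⟧ := by
  have := PGame.game_eq (PGame.add_powHalf_succ_self_eq_powHalf q)
  simpa using this

theorem quot_powHalf_lt (q : ℕ) : (⟦powHalf (q + 1)⟧ : Game) < ⟦powHalf q⟧ :=
  PGame.lt_iff_game_lt.1 (powHalf_succ_lt_powHalf q)

theorem quot_powHalf_le (q : ℕ) : (⟦powHalf (q + 1)⟧ : Game) ≤ ⟦powHalf q⟧ :=
  PGame.le_iff_game_le.1 (powHalf_succ_le_powHalf q)

/-! ### iterated sums of `powHalf (e+1)` and their options -/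

/-- `negs e j` is `j` copies of `-powHalf (e+1)` added up. -/
def negs (e : ℕ) : ℕ → PGame.{u}
  | 0 => 0
  | j + 1 => negs e j + -powHalf (e + 1)

/-- `poss e j` is `j` copies of `powHalf (e+1)` added up. -/
def poss (e : ℕ) : ℕ → PGame.{u}
  | 0 => 0
  | j + 1 => poss e j + powHalf (e + 1)

theorem negs_numeric (e : ℕ) : ∀ j, (negs.{u} e j).Numeric
  | 0 => numeric_zero
  | j + 1 => (negs_numeric e j).add (numeric_powHalf (e + 1)).neg

theorem poss_numeric (e : ℕ) : ∀ j, (poss.{u} e j).Numeric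
  | 0 => numeric_zero
  | j + 1 => (poss_numeric e j).add (numeric_powHalf (e + 1))

theorem negs_val (e : ℕ) : ∀ j, (⟦negs.{u} e j⟧ : Game) = -(j • ⟦powHalf (e + 1)⟧)
  | 0 => by simp [negs]
  | j + 1 => by
      show (⟦negs e j + -powHalf (e+1)⟧ : Game) = _
      rw [quot_add, quot_neg, negs_val e j, succ_nsmul]
      abel

theorem poss_val (e : ℕ) : ∀ j, (⟦poss.{u} e j⟧ : Game) = j • ⟦powHalf (e + 1)⟧
  | 0 => by simp [poss]
  | j + 1 => by
      show (⟦poss e j + powHalf (e+1)⟧ : Game) = _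
      rw [quot_add, poss_val e j, succ_nsmul]

theorem negs_right_val (e : ℕ) : ∀ (j : ℕ) (k : (negs.{u} e j).RightMoves),
    ∃ j', j = j' + 1 ∧ (⟦(negs.{u} e j).moveRight k⟧ : Game) = -(j' • ⟦powHalf (e + 1)⟧) := by
  intro j
  induction j with
  | zero => intro k; exact PEmpty.elim k
  | succ j IH =>
    intro k
    revert k
    rw [show negs e (j+1) = negs e j + -powHalf (e+1) from rfl]
    intro k
    induction k using rightMoves_add_cases with
    | hl i =>
      obtain ⟨j', hj', hv⟩ := IH i
      refine ⟨j' + 1, by omega, ?_⟩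
      rw [add_moveRight_inl, quot_add, hv, quot_neg, succ_nsmul]
      abel
    | hr i =>
      refine ⟨j, rfl, ?_⟩
      rw [add_moveRight_inr]
      have h2 : (-powHalf (e + 1)).moveRight i
          = -(powHalf (e+1)).moveLeft (toRightMovesNeg.symm i) := moveRight_neg' i
      rw [h2, powHalf_moveLeft, quot_add, negs_val]
      simp

theorem negs_left_val (e : ℕ) : ∀ (j : ℕ) (k : (negs.{u} e j).LeftMoves),
    ∃ j', j = j' + 1 ∧ (⟦(negs.{u} e j).moveLeft k⟧ : Game) = -((j + 1) • ⟦powHalf (e + 1)⟧) := by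
  intro j
  induction j with
  | zero => intro k; exact PEmpty.elim k
  | succ j IH =>
    intro k
    revert k
    rw [show negs e (j+1) = negs e j + -powHalf (e+1) from rfl]
    intro k
    induction k using leftMoves_add_cases with
    | hl i =>
      obtain ⟨j', hj', hv⟩ := IH i
      refine ⟨j' + 1, by omega, ?_⟩
      rw [add_moveLeft_inl, quot_add, hv, quot_neg, succ_nsmul ⟦powHalf (e+1)⟧ (j+1)]
      abel
    | hr i =>
      refine ⟨j, rfl, ?_⟩
      rw [add_moveLeft_inr]
      have h2 : (-powHalf (e + 1)).moveLeft i
          = -(powHalf (e+1)).moveRight (toLeftMovesNeg.symm i) := moveLeft_neg' i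
      rw [h2, powHalf_succ_moveRight, quot_add, negs_val, quot_neg]
      rw [show j + 1 + 1 = j + 2 from rfl, succ_nsmul ⟦powHalf (e+1)⟧ (j+1),
        succ_nsmul ⟦powHalf (e+1)⟧ j, ← quot_powHalf_add_self e]
      abel

theorem poss_right_val (e : ℕ) : ∀ (j : ℕ) (k : (poss.{u} e j).RightMoves),
    ∃ j', j = j' + 1 ∧ (⟦(poss.{u} e j).moveRight k⟧ : Game) = (j + 1) • ⟦powHalf (e + 1)⟧ := by
  intro j
  induction j with
  | zero => intro k; exact PEmpty.elim k
  | succ j IH =>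
    intro k
    revert k
    rw [show poss e (j+1) = poss e j + powHalf (e+1) from rfl]
    intro k
    induction k using rightMoves_add_cases with
    | hl i =>
      obtain ⟨j', hj', hv⟩ := IH i
      refine ⟨j' + 1, by omega, ?_⟩
      rw [add_moveRight_inl, quot_add, hv, succ_nsmul ⟦powHalf (e+1)⟧ (j+1)]
    | hr i =>
      refine ⟨j, rfl, ?_⟩
      rw [add_moveRight_inr, powHalf_succ_moveRight, quot_add, poss_val]
      rw [show j + 1 + 1 = j + 2 from rfl, succ_nsmul ⟦powHalf (e+1)⟧ (j+1),
        succ_nsmul ⟦powHalf (e+1)⟧ j, ← quot_powHalf_add_self e]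
      abel

theorem poss_left_val (e : ℕ) : ∀ (j : ℕ) (k : (poss.{u} e j).LeftMoves),
    ∃ j', j = j' + 1 ∧ (⟦(poss.{u} e j).moveLeft k⟧ : Game) = j' • ⟦powHalf (e + 1)⟧ := by
  intro j
  induction j with
  | zero => intro k; exact PEmpty.elim k
  | succ j IH =>
    intro k
    revert k
    rw [show poss e (j+1) = poss e j + powHalf (e+1) from rfl]
    intro k
    induction k using leftMoves_add_cases with
    | hl i =>
      obtain ⟨j', hj', hv⟩ := IH i
      refine ⟨j' + 1, by omega, ?_⟩
      rw [add_moveLeft_inl, quot_add, hv, succ_nsmul ⟦powHalf (e+1)⟧ j']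
    | hr i =>
      refine ⟨j, rfl, ?_⟩
      rw [add_moveLeft_inr, powHalf_moveLeft, quot_add, poss_val]
      simp


/-! ### cross lemmas against translated games -/

theorem le_add_negs {c y : PGame.{u}} (e j : ℕ)
    (h1 : ∀ i, (⟦c.moveLeft i⟧ : Game) < ⟦y⟧ - j • ⟦powHalf (e+1)⟧)
    (h2 : ∀ i, (⟦c⟧ : Game) < ⟦y.moveRight i⟧ - j • ⟦powHalf (e+1)⟧)
    (h3 : ∀ j', j = j' + 1 → (⟦c⟧ : Game) < ⟦y⟧ - j' • ⟦powHalf (e+1)⟧) :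
    c ≤ y + negs e j := by
  apply le_of_forall_lf
  · intro i
    apply glt
    rw [quot_add, negs_val]
    have := h1 i
    rw [sub_eq_add_neg] at this
    exact this
  · intro k
    induction k using rightMoves_add_cases with
    | hl i =>
      apply glt
      rw [add_moveRight_inl, quot_add, negs_val]
      have := h2 i
      rw [sub_eq_add_neg] at this
      exact this
    | hr i =>
      apply glt
      obtain ⟨j', hj', hv⟩ := negs_right_val e j i
      rw [add_moveRight_inr, quot_add, hv]
      have := h3 j' hj'
      rw [sub_eq_add_neg] at this
      exact this

theorem add_negs_le {c y : PGame.{u}} (e j : ℕ)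
    (h1 : ∀ i, (⟦y.moveLeft i⟧ : Game) - j • ⟦powHalf (e+1)⟧ < ⟦c⟧)
    (h2 : ∀ j', j = j' + 1 → (⟦y⟧ : Game) - (j+1) • ⟦powHalf (e+1)⟧ < ⟦c⟧)
    (h3 : ∀ i, (⟦y⟧ : Game) - j • ⟦powHalf (e+1)⟧ < ⟦c.moveRight i⟧) :
    y + negs e j ≤ c := by
  apply le_of_forall_lf
  · intro k
    induction k using leftMoves_add_cases with
    | hl i =>
      apply glt
      rw [add_moveLeft_inl, quot_add, negs_val]
      have := h1 i
      rw [sub_eq_add_neg] at this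
      exact this
    | hr i =>
      apply glt
      obtain ⟨j', hj', hv⟩ := negs_left_val e j i
      rw [add_moveLeft_inr, quot_add, hv]
      have := h2 j' hj'
      rw [sub_eq_add_neg] at this
      exact this
  · intro i
    apply glt
    rw [quot_add, negs_val]
    have := h3 i
    rw [sub_eq_add_neg] at this
    exact this

theorem le_add_poss {c y : PGame.{u}} (e j : ℕ)
    (h1 : ∀ i, (⟦c.moveLeft i⟧ : Game) < ⟦y⟧ + j • ⟦powHalf (e+1)⟧)
    (h2 : ∀ i, (⟦c⟧ : Game) < ⟦y.moveRight i⟧ + j • ⟦powHalf (e+1)⟧)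
    (h3 : (⟦c⟧ : Game) < ⟦y⟧ + (j+1) • ⟦powHalf (e+1)⟧) :
    c ≤ y + poss e j := by
  apply le_of_forall_lf
  · intro i
    apply glt
    rw [quot_add, poss_val]
    exact h1 i
  · intro k
    induction k using rightMoves_add_cases with
    | hl i =>
      apply glt
      rw [add_moveRight_inl, quot_add, poss_val]
      exact h2 i
    | hr i =>
      apply glt
      obtain ⟨j', hj', hv⟩ := poss_right_val e j i
      rw [add_moveRight_inr, quot_add, hv]
      exact hj' ▸ h3

theorem add_poss_le {c y : PGame.{u}} (e j : ℕ)
    (h1 : ∀ i, (⟦y.moveLeft i⟧ : Game) + j • ⟦powHalf (e+1)⟧ < ⟦c⟧)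
    (h2 : ∀ j', j = j' + 1 → (⟦y⟧ : Game) + j' • ⟦powHalf (e+1)⟧ < ⟦c⟧)
    (h3 : ∀ i, (⟦y⟧ : Game) + j • ⟦powHalf (e+1)⟧ < ⟦c.moveRight i⟧) :
    y + poss e j ≤ c := by
  apply le_of_forall_lf
  · intro k
    induction k using leftMoves_add_cases with
    | hl i =>
      apply glt
      rw [add_moveLeft_inl, quot_add, poss_val]
      exact h1 i
    | hr i =>
      apply glt
      obtain ⟨j', hj', hv⟩ := poss_left_val e j i
      rw [add_moveLeft_inr, quot_add, hv]
      exact h2 j' hj'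
  · intro i
    apply glt
    rw [quot_add, poss_val]
    exact h3 i

/-! ### minimal forms in an interval of values -/

/-- membership of `x` in the open interval of values `(⟦a⟧, g)` -/
def Mid (a : PGame.{u}) (g : Game.{u}) (x : PGame.{u}) : Prop :=
  x.Numeric ∧ (⟦a⟧ : Game) < ⟦x⟧ ∧ (⟦x⟧ : Game) < g

theorem min_shape_left {a : PGame.{u}} {g : Game.{u}} {m : PGame.{u}} (ha : a.Numeric)
    (hm : Mid a g m) (hmin : ∀ y, Mid a g y → m.birthday ≤ y.birthday) (i : m.LeftMoves) :
    (⟦m.moveLeft i⟧ : Game) ≤ ⟦a⟧ := by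
  rcases game_lt_or_le ha (hm.1.moveLeft i) with h | h
  · exfalso
    have hMid : Mid a g (m.moveLeft i) :=
      ⟨hm.1.moveLeft i, h, lt_trans (PGame.lt_iff_game_lt.1 (hm.1.moveLeft_lt i)) hm.2.2⟩
    exact absurd (hmin _ hMid) (not_le.2 (birthday_moveLeft_lt i))
  · exact h

theorem min_shape_right {a : PGame.{u}} {g : Game.{u}} {m c : PGame.{u}} (ha : a.Numeric)
    (hc : c.Numeric) (hcg : (⟦c⟧ : Game) = g)
    (hm : Mid a g m) (hmin : ∀ y, Mid a g y → m.birthday ≤ y.birthday) (j : m.RightMoves) :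
    g ≤ ⟦m.moveRight j⟧ := by
  rcases game_lt_or_le (hm.1.moveRight j) hc with h | h
  · exfalso
    have hMid : Mid a g (m.moveRight j) :=
      ⟨hm.1.moveRight j, lt_trans hm.2.1 (PGame.lt_iff_game_lt.1 (hm.1.lt_moveRight j)),
        hcg ▸ h⟩
    exact absurd (hmin _ hMid) (not_le.2 (birthday_moveRight_lt j))
  · exact hcg ▸ h

/-- two minimal-birthday forms in the same interval have the same value. -/
theorem min_val_unique {a : PGame.{u}} {g : Game.{u}} {m m' : PGame.{u}} (ha : a.Numeric)
    {c : PGame.{u}} (hc : c.Numeric) (hcg : (⟦c⟧ : Game) = g)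
    (hm : Mid a g m) (hmin : ∀ y, Mid a g y → m.birthday ≤ y.birthday)
    (hm' : Mid a g m') (hmin' : ∀ y, Mid a g y → m'.birthday ≤ y.birthday) :
    (⟦m⟧ : Game) = ⟦m'⟧ := by
  have h1 : m ≤ m' := crossLe
    (fun i => lt_of_le_of_lt (min_shape_left ha hm hmin i) hm'.2.1)
    (fun j => lt_of_lt_of_le hm.2.2 (min_shape_right ha hc hcg hm' hmin' j))
  have h2 : m' ≤ m := crossLe
    (fun i => lt_of_le_of_lt (min_shape_left ha hm' hmin' i) hm.2.1)
    (fun j => lt_of_lt_of_le hm'.2.2 (min_shape_right ha hc hcg hm hmin j))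
  exact le_antisymm (PGame.le_iff_game_le.1 h1) (PGame.le_iff_game_le.1 h2)

/-! ### the easy half-step: when the surrounding interval reaches far enough -/

theorem crux_core {a d mc : PGame.{u}} {q : ℕ} (ha : a.Numeric) (hd : d.Numeric)
    (hmc : Mid a ⟦d⟧ mc) (hmcmin : ∀ y, Mid a ⟦d⟧ y → mc.birthday ≤ y.birthday)
    (hval : (⟦mc⟧ : Game) = ⟦a⟧ + ⟦powHalf q⟧)
    (hfar : (⟦a⟧ : Game) + ⟦powHalf q⟧ + ⟦powHalf (q+1)⟧ ≤ ⟦d⟧)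
    {m : PGame.{u}} (hm : Mid a ⟦mc⟧ m)
    (hmmin : ∀ y, Mid a ⟦mc⟧ y → m.birthday ≤ y.birthday) :
    (⟦m⟧ : Game) = ⟦a⟧ + ⟦powHalf (q+1)⟧ := by
  have hhq : (⟦powHalf (q+1)⟧ : Game) + ⟦powHalf (q+1)⟧ = ⟦powHalf q⟧ := quot_powHalf_add_self q
  have hhpos : (0 : Game) < ⟦powHalf (q+1)⟧ := quot_powHalf_pos (q+1)
  have hval' : (⟦mc⟧ : Game) - 1 • ⟦powHalf (q+1)⟧ = ⟦a⟧ + ⟦powHalf (q+1)⟧ := by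
    rw [hval, one_nsmul, ← hhq]; abel
  -- m ≤ mc + negs q 1
  have hup : m ≤ mc + negs q 1 := by
    apply le_add_negs
    · intro i
      rw [hval']
      exact lt_of_le_of_lt (min_shape_left ha hm hmmin i)
        (lt_add_of_pos_right _ hhpos)
    · intro i
      have hr := min_shape_right ha hd rfl hmc hmcmin i
      have : (⟦a⟧ : Game) + ⟦powHalf q⟧ ≤ ⟦mc.moveRight i⟧ - 1 • ⟦powHalf (q+1)⟧ := by
        rw [one_nsmul, le_sub_iff_add_le]
        calc (⟦a⟧:Game) + ⟦powHalf q⟧ + ⟦powHalf (q+1)⟧ ≤ ⟦d⟧ := hfar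
        _ ≤ _ := hr
      exact lt_of_lt_of_le (hval ▸ hm.2.2) this
    · intro j' hj'
      obtain rfl : j' = 0 := by omega
      rw [zero_nsmul, _root_.sub_zero]
      exact hm.2.2
  have hdown : mc + negs q 1 ≤ m := by
    apply add_negs_le
    · intro i
      calc (⟦mc.moveLeft i⟧ : Game) - 1 • ⟦powHalf (q+1)⟧
          ≤ ⟦a⟧ - 1 • ⟦powHalf (q+1)⟧ :=
            sub_le_sub_right (min_shape_left ha hmc hmcmin i) _
        _ < ⟦a⟧ := by rw [one_nsmul]; exact sub_lt_self _ hhpos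
        _ < ⟦m⟧ := hm.2.1
    · intro j' hj'
      obtain rfl : j' = 0 := by omega
      have h0 : (⟦mc⟧ : Game) - (0+1+1) • ⟦powHalf (q+1)⟧ = ⟦a⟧ := by
        rw [hval]
        rw [show (0+1+1 : ℕ) = 2 from rfl, two_nsmul, hhq]
        abel
      rw [h0]
      exact hm.2.1
    · intro i
      rw [hval']
      have hge := min_shape_right ha hmc.1 rfl hm hmmin i
      calc (⟦a⟧ : Game) + ⟦powHalf (q+1)⟧ < ⟦a⟧ + ⟦powHalf q⟧ := by
            exact add_lt_add_right (quot_powHalf_lt q) _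
        _ = ⟦mc⟧ := hval.symm
        _ ≤ _ := hge
  have : (⟦m⟧ : Game) = ⟦mc + negs q 1⟧ :=
    le_antisymm (PGame.le_iff_game_le.1 hup) (PGame.le_iff_game_le.1 hdown)
  rw [this, quot_add, negs_val]
  rw [show (⟦mc⟧ : Game) + -(1 • ⟦powHalf (q+1)⟧) = ⟦mc⟧ - 1 • ⟦powHalf (q+1)⟧ from by abel]
  exact hval'


theorem gadd_nsmul_lt {g : Game.{u}} (hpos : (0:Game) < g) (base : Game.{u}) {j j' : ℕ}
    (h : j < j') : base + j • g < base + j' • g :=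
  add_lt_add_right (nsmul_lt_nsmul_left hpos h) base

theorem gadd_nsmul_le {g : Game.{u}} (hpos : (0:Game) < g) (base : Game.{u}) {j j' : ℕ}
    (h : j ≤ j') : base + j • g ≤ base + j' • g :=
  add_le_add_right (nsmul_le_nsmul_left hpos.le h) base

theorem gsub_succ (x g : Game.{u}) (n : ℕ) : x + n • g - (n + 1) • g = x - g := by
  rw [add_nsmul, one_nsmul]
  abel

theorem gsub_succ' (x g : Game.{u}) (n : ℕ) : x + n • g + -((n + 1) • g) = x - g := by
  rw [← sub_eq_add_neg]
  exact gsub_succ x g n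

theorem gadd_one_nsmul (x g : Game.{u}) (n : ℕ) : x + g + n • g = x + (n + 1) • g := by
  rw [add_nsmul, one_nsmul]
  abel


/-! ### the hard half-step at the bottom level -/

theorem crux_hard {a b : PGame.{u}} {p : ℕ} (ha : a.Numeric) (hb : b.Numeric)
    (hG : (ball a b).Numeric)
    (hv : (⟦ball a b⟧ : Game) = ⟦a⟧ + ⟦powHalf p⟧)
    {m : PGame.{u}} (hm : Mid a ((⟦a⟧ : Game) + ⟦powHalf p⟧) m)
    (hmmin : ∀ y, Mid a ((⟦a⟧ : Game) + ⟦powHalf p⟧) y → m.birthday ≤ y.birthday) :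
    (⟦m⟧ : Game) = ⟦a⟧ + ⟦powHalf (p+1)⟧ := by
  have hhq : (⟦powHalf (p+1)⟧ : Game) + ⟦powHalf (p+1)⟧ = ⟦powHalf p⟧ := quot_powHalf_add_self p
  have hpos : (0 : Game) < ⟦powHalf (p+1)⟧ := quot_powHalf_pos (p+1)
  have hlt1 : (⟦powHalf (p+1)⟧ : Game) < ⟦powHalf p⟧ := quot_powHalf_lt p
  -- the reference form of value γ
  have hc₀N : (a + powHalf p).Numeric := ha.add (numeric_powHalf p)
  have hc₀v : (⟦a + powHalf p⟧ : Game) = ⟦a⟧ + ⟦powHalf p⟧ := quot_add _ _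
  have haγ : (⟦a⟧ : Game) < ⟦a⟧ + ⟦powHalf p⟧ := lt_add_of_pos_right _ (quot_powHalf_pos p)
  have hamid : (⟦a⟧ : Game) < ⟦a⟧ + ⟦powHalf (p+1)⟧ := lt_add_of_pos_right _ hpos
  have hmidγ : (⟦a⟧ : Game) + ⟦powHalf (p+1)⟧ < ⟦a⟧ + ⟦powHalf p⟧ := add_lt_add_right hlt1 _
  have hGb : (⟦a⟧ : Game) + ⟦powHalf p⟧ < ⟦b⟧ := by
    have h1 : ball a b < b := hG.lt_moveRight PUnit.unit
    have h2 := PGame.lt_iff_game_lt.1 h1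
    rwa [hv] at h2
  -- m's shape
  have hmL : ∀ i, (⟦m.moveLeft i⟧ : Game) ≤ ⟦a⟧ := min_shape_left ha hm hmmin
  have hmR : ∀ j, (⟦a⟧ : Game) + ⟦powHalf p⟧ ≤ ⟦m.moveRight j⟧ :=
    min_shape_right ha hc₀N hc₀v hm hmmin
  -- the minimal form m₀ in (a, b), of value γ
  obtain ⟨m₀, hm₀, hm₀min⟩ := exists_min_bd (Mid a ⟦b⟧)
    ⟨a + powHalf p, hc₀N, by rw [hc₀v]; exact haγ, by rw [hc₀v]; exact hGb⟩
  have hm₀L : ∀ i, (⟦m₀.moveLeft i⟧ : Game) ≤ ⟦a⟧ := min_shape_left ha hm₀ hm₀min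
  have hm₀R : ∀ j, (⟦b⟧ : Game) ≤ ⟦m₀.moveRight j⟧ := min_shape_right ha hb rfl hm₀ hm₀min
  have hm₀val : (⟦m₀⟧ : Game) = ⟦a⟧ + ⟦powHalf p⟧ := by
    have h1 : m₀ ≤ ball a b := crossLe
      (fun i => lt_of_le_of_lt (hm₀L i) (by rw [← hv] at haγ; exact haγ))
      (fun j => hm₀.2.2)
    have h2 : ball a b ≤ m₀ := crossLe
      (fun i => hm₀.2.1)
      (fun j => by rw [hv]; exact lt_of_lt_of_le hGb (hm₀R j))
    rw [← hv]
    exact le_antisymm (PGame.le_iff_game_le.1 h1) (PGame.le_iff_game_le.1 h2)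
  by_cases hfar : (⟦a⟧ : Game) + ⟦powHalf p⟧ + ⟦powHalf (p+1)⟧ ≤ ⟦b⟧
  · -- far case : directly by crux_core
    refine crux_core ha hb hm₀ hm₀min hm₀val hfar ?_ ?_
    · rw [hm₀val]; exact hm
    · intro y hy
      rw [hm₀val] at hy
      exact hmmin y hy
  · -- close case
    have hclose : (⟦b⟧ : Game) < ⟦a⟧ + ⟦powHalf p⟧ + ⟦powHalf (p+1)⟧ := by
      have hc₁N : (a + powHalf p + powHalf (p+1)).Numeric := hc₀N.add (numeric_powHalf (p+1))
      have := game_lt_of_not_le hb hc₁N (by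
        rw [quot_add, quot_add]
        exact hfar)
      rwa [quot_add, quot_add] at this
    -- z₀ := m₀ - powHalf (p+1), of value mid = a + powHalf (p+1)
    have hz₀N : (m₀ + negs p 1).Numeric := hm₀.1.add (negs_numeric p 1)
    have hz₀v : (⟦m₀ + negs p 1⟧ : Game) = ⟦a⟧ + ⟦powHalf (p+1)⟧ := by
      rw [quot_add, negs_val, hm₀val, one_nsmul, ← hhq]
      abel
    have hmidν : (⟦a⟧ : Game) + ⟦powHalf (p+1)⟧ < ⟦b⟧ - ⟦powHalf (p+1)⟧ := by
      rw [lt_sub_iff_add_lt, add_assoc, hhq]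
      exact hGb
    have hνγ : (⟦b⟧ : Game) - ⟦powHalf (p+1)⟧ < ⟦a⟧ + ⟦powHalf p⟧ := by
      rw [sub_lt_iff_lt_add', add_comm]
      exact hclose
    -- the form of value ν
    have hbnN : (b + negs p 1).Numeric := hb.add (negs_numeric p 1)
    have hbnv : (⟦b + negs p 1⟧ : Game) = ⟦b⟧ - ⟦powHalf (p+1)⟧ := by
      rw [quot_add, negs_val, one_nsmul]; abel
    -- m₂ : minimal form in (a, ν), of value mid
    obtain ⟨m₂, hm₂, hm₂min⟩ := exists_min_bd (Mid a ((⟦b⟧ : Game) - ⟦powHalf (p+1)⟧))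
      ⟨m₀ + negs p 1, hz₀N, by rw [hz₀v]; exact hamid, by rw [hz₀v]; exact hmidν⟩
    have hm₂L : ∀ i, (⟦m₂.moveLeft i⟧ : Game) ≤ ⟦a⟧ := min_shape_left ha hm₂ hm₂min
    have hm₂R : ∀ j, (⟦b⟧ : Game) - ⟦powHalf (p+1)⟧ ≤ ⟦m₂.moveRight j⟧ :=
      min_shape_right ha hbnN hbnv hm₂ hm₂min
    have hm₂val : (⟦m₂⟧ : Game) = ⟦a⟧ + ⟦powHalf (p+1)⟧ := by
      have h1 : m₂ ≤ m₀ + negs p 1 := by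
        apply le_add_negs
        · intro i
          refine lt_of_le_of_lt (hm₂L i) ?_
          rw [hm₀val, one_nsmul]
          rw [show (⟦a⟧ : Game) + ⟦powHalf p⟧ - ⟦powHalf (p+1)⟧
              = ⟦a⟧ + ⟦powHalf (p+1)⟧ from by rw [← hhq]; abel]
          exact hamid
        · intro i
          rw [one_nsmul]
          refine lt_of_lt_of_le hm₂.2.2 ?_
          exact sub_le_sub_right (hm₀R i) _
        · intro j' hj'
          obtain rfl : j' = 0 := by omega
          rw [zero_nsmul, _root_.sub_zero, hm₀val]
          exact lt_trans hm₂.2.2 hνγ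
      have h2 : m₀ + negs p 1 ≤ m₂ := by
        apply add_negs_le
        · intro i
          rw [one_nsmul]
          calc (⟦m₀.moveLeft i⟧ : Game) - ⟦powHalf (p+1)⟧
              ≤ ⟦a⟧ - ⟦powHalf (p+1)⟧ := sub_le_sub_right (hm₀L i) _
            _ < ⟦a⟧ := sub_lt_self _ hpos
            _ < ⟦m₂⟧ := hm₂.2.1
        · intro j' hj'
          obtain rfl : j' = 0 := by omega
          rw [hm₀val, show ((0:ℕ)+1+1) • (⟦powHalf (p+1)⟧ : Game)
            = ⟦powHalf p⟧ from by rw [show (0:ℕ)+1+1 = 2 from rfl, two_nsmul, hhq]]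
          rw [add_sub_cancel_right]
          exact hm₂.2.1
        · intro i
          rw [one_nsmul, hm₀val]
          refine lt_of_lt_of_le ?_ (hm₂R i)
          rw [show (⟦a⟧ : Game) + ⟦powHalf p⟧ - ⟦powHalf (p+1)⟧
              = ⟦a⟧ + ⟦powHalf (p+1)⟧ from by rw [← hhq]; abel]
          exact hmidν
      have := le_antisymm (PGame.le_iff_game_le.1 h1) (PGame.le_iff_game_le.1 h2)
      rw [this, hz₀v]
    -- lower bound : mid ≤ σ
    have hlow : (⟦a⟧ : Game) + ⟦powHalf (p+1)⟧ ≤ ⟦m⟧ := by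
      have h2 : m₀ + negs p 1 ≤ m := by
        apply add_negs_le
        · intro i
          rw [one_nsmul]
          calc (⟦m₀.moveLeft i⟧ : Game) - ⟦powHalf (p+1)⟧
              ≤ ⟦a⟧ - ⟦powHalf (p+1)⟧ := sub_le_sub_right (hm₀L i) _
            _ < ⟦a⟧ := sub_lt_self _ hpos
            _ < ⟦m⟧ := hm.2.1
        · intro j' hj'
          obtain rfl : j' = 0 := by omega
          rw [hm₀val, show ((0:ℕ)+1+1) • (⟦powHalf (p+1)⟧ : Game)
            = ⟦powHalf p⟧ from by rw [show (0:ℕ)+1+1 = 2 from rfl, two_nsmul, hhq]]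
          rw [add_sub_cancel_right]
          exact hm.2.1
        · intro i
          rw [one_nsmul, hm₀val]
          refine lt_of_lt_of_le ?_ (hmR i)
          rw [show (⟦a⟧ : Game) + ⟦powHalf p⟧ - ⟦powHalf (p+1)⟧
              = ⟦a⟧ + ⟦powHalf (p+1)⟧ from by rw [← hhq]; abel]
          exact hmidγ
      have := PGame.le_iff_game_le.1 h2
      rwa [hz₀v] at this
    -- suppose σ is not equal to mid; derive a contradiction
    by_contra hbad
    have hmidσ : (⟦a⟧ : Game) + ⟦powHalf (p+1)⟧ < ⟦m⟧ := lt_of_le_of_ne hlow (fun hh => hbad hh.symm)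
    -- good subcase : σ < ν
    rcases game_lt_or_le hm.1 hbnN with hgood | hν
    · rw [hbnv] at hgood
      -- m belongs to the (a, ν) class, so it is a minimal form there as well
      have hmMid2 : Mid a ((⟦b⟧ : Game) - ⟦powHalf (p+1)⟧) m := ⟨hm.1, hm.2.1, hgood⟩
      have hble : m₂.birthday ≤ m.birthday := hm₂min m hmMid2
      have hbge : m.birthday ≤ m₂.birthday := hmmin m₂ ⟨hm₂.1, hm₂.2.1, lt_trans hm₂.2.2 hνγ⟩
      have huniq := min_val_unique ha hc₀N hc₀v hm hmmin
        (⟨hm₂.1, hm₂.2.1, lt_trans hm₂.2.2 hνγ⟩ : Mid a ((⟦a⟧:Game) + ⟦powHalf p⟧) m₂)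
        (fun y hy => le_trans hble (hmmin y hy))
      rw [huniq, hm₂val] at hmidσ
      exact lt_irrefl _ hmidσ
    · -- bad branch : ν ≤ σ
      rw [hbnv] at hν
      have hbσ : (⟦b⟧ : Game) ≤ ⟦m⟧ + ⟦powHalf (p+1)⟧ := by
        rw [← sub_le_iff_le_add]
        exact hν
      have hσγ : (⟦m⟧ : Game) < ⟦a⟧ + ⟦powHalf p⟧ := hm.2.2
      -- birthday of m₀ is strictly smaller than that of m
      have hmMid0 : Mid a ⟦b⟧ m := ⟨hm.1, hm.2.1, lt_trans hσγ hGb⟩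
      have hbd01 : m₀.birthday < m.birthday := by
        rcases lt_or_eq_of_le (hm₀min m hmMid0) with h | h
        · exact h
        · exfalso
          have huniq := min_val_unique ha hb rfl hmMid0
            (fun y hy => h ▸ hm₀min y hy) hm₀ hm₀min
          rw [hm₀val] at huniq
          exact absurd huniq (ne_of_lt hσγ)
      -- translated reference forms σ + j·h
      have hformN : ∀ j : ℕ, (m + poss p j).Numeric := fun j => hm.1.add (poss_numeric p j)
      have hformv : ∀ j : ℕ, (⟦m + poss p j⟧ : Game) = ⟦m⟧ + j • ⟦powHalf (p+1)⟧ :=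
        fun j => by rw [quot_add, poss_val]
      have hmidσ' : (⟦a⟧ : Game) + ⟦powHalf p⟧ < ⟦m⟧ + ⟦powHalf (p+1)⟧ := by
        rw [← hhq, ← add_assoc]
        exact add_lt_add_left hmidσ _
      -- locating a value in the ladder
      have findk : ∀ (k : ℕ) (v : PGame.{u}), v.Numeric →
          (⟦m⟧ : Game) + 1 • ⟦powHalf (p+1)⟧ < ⟦v⟧ →
          (⟦v⟧ : Game) ≤ ⟦m⟧ + (k+2) • ⟦powHalf (p+1)⟧ →
          ∃ k', ((⟦m⟧ : Game) + (k'+1) • ⟦powHalf (p+1)⟧ < ⟦v⟧ ∧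
            (⟦v⟧ : Game) ≤ ⟦m⟧ + (k'+2) • ⟦powHalf (p+1)⟧) := by
        intro k
        induction k with
        | zero =>
          intro v _ h1 h2
          refine ⟨0, ?_, h2⟩
          rw [show (0:ℕ)+1 = 1 from rfl]
          exact h1
        | succ k IHk =>
          intro v hv h1 h2
          rcases game_lt_or_le (hformN (k+2)) hv with hlt | hle
          · rw [hformv] at hlt
            refine ⟨k+1, ?_, h2⟩
            rw [show k+1+1 = k+2 from by omega]
            exact hlt
          · rw [hformv] at hle
            exact IHk v hv h1 hle
      -- the main induction : no value sits in (σ + (k+1)h, σ + (k+2)h]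
      have IND : ∀ (o : Ordinal.{u}) (y : PGame.{u}), y.birthday = o → y.Numeric →
          ∀ k : ℕ, (⟦m⟧ : Game) + (k+1) • ⟦powHalf (p+1)⟧ < ⟦y⟧ →
          (⟦y⟧ : Game) ≤ ⟦m⟧ + (k+2) • ⟦powHalf (p+1)⟧ → False := by
        intro o
        induction o using Ordinal.induction with
        | h o IH =>
        intro y hyb hyN k hk1 hk2
        have hyL : ∀ i, (⟦y.moveLeft i⟧ : Game) ≤ ⟦m⟧ + 1 • ⟦powHalf (p+1)⟧ := by
          intro i
          rcases game_lt_or_le (hformN 1) (hyN.moveLeft i) with hlt | hle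
          · exfalso
            rw [hformv] at hlt
            have hlty : (⟦y.moveLeft i⟧ : Game) ≤ ⟦m⟧ + (k+2) • ⟦powHalf (p+1)⟧ :=
              le_trans (PGame.lt_iff_game_lt.1 (hyN.moveLeft_lt i)).le hk2
            obtain ⟨k', hk'1, hk'2⟩ := findk k _ (hyN.moveLeft i) hlt hlty
            exact IH _ (hyb ▸ birthday_moveLeft_lt i) _ rfl (hyN.moveLeft i) k' hk'1 hk'2
          · rw [hformv] at hle
            exact hle
        have hyR : ∀ i (j : ℕ), (⟦m⟧ : Game) + j • ⟦powHalf (p+1)⟧ < ⟦y.moveRight i⟧ := by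
          intro i j
          induction j with
          | zero =>
            rw [zero_nsmul, add_zero]
            calc (⟦m⟧:Game) < ⟦m⟧ + (k+1) • ⟦powHalf (p+1)⟧ :=
                  lt_add_of_pos_right _ (nsmul_pos hpos (by omega))
              _ < ⟦y⟧ := hk1
              _ < ⟦y.moveRight i⟧ := PGame.lt_iff_game_lt.1 (hyN.lt_moveRight i)
          | succ j IHj =>
            rcases game_lt_or_le (hformN (j+1)) (hyN.moveRight i) with hlt | hle
            · rw [hformv] at hlt; exact hlt
            · exfalso
              rw [hformv] at hle
              cases j with
              | zero =>
                have h1 : (⟦m⟧:Game) + (0+1) • ⟦powHalf (p+1)⟧ < ⟦y.moveRight i⟧ := by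
                  calc (⟦m⟧:Game) + (0+1) • ⟦powHalf (p+1)⟧
                      ≤ ⟦m⟧ + (k+1) • ⟦powHalf (p+1)⟧ := gadd_nsmul_le hpos _ (by omega)
                    _ < ⟦y⟧ := hk1
                    _ < _ := PGame.lt_iff_game_lt.1 (hyN.lt_moveRight i)
                exact absurd hle h1.not_ge
              | succ j' =>
                refine IH _ (hyb ▸ birthday_moveRight_lt i) _ rfl (hyN.moveRight i) j' IHj ?_
                rw [show j'+2 = j'+1+1 from by omega]
                exact hle
        have hyval : (⟦y⟧ : Game) = ⟦m⟧ + (k+2) • ⟦powHalf (p+1)⟧ := by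
          have hle1 : y ≤ m + poss p (k+2) := by
            apply le_add_poss
            · intro i
              calc (⟦y.moveLeft i⟧:Game) ≤ ⟦m⟧ + 1 • ⟦powHalf (p+1)⟧ := hyL i
                _ < ⟦m⟧ + (k+2) • ⟦powHalf (p+1)⟧ := gadd_nsmul_lt hpos _ (by omega)
            · intro i
              calc (⟦y⟧:Game) ≤ ⟦m⟧ + (k+2) • ⟦powHalf (p+1)⟧ := hk2
                _ < (⟦a⟧+⟦powHalf p⟧) + (k+2) • ⟦powHalf (p+1)⟧ := add_lt_add_left hσγ _
                _ ≤ ⟦m.moveRight i⟧ + (k+2) • ⟦powHalf (p+1)⟧ := add_le_add_left (hmR i) _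
            · calc (⟦y⟧:Game) ≤ ⟦m⟧ + (k+2) • ⟦powHalf (p+1)⟧ := hk2
                _ < ⟦m⟧ + (k+2+1) • ⟦powHalf (p+1)⟧ := gadd_nsmul_lt hpos _ (by omega)
          have hle2 : m + poss p (k+2) ≤ y := by
            apply add_poss_le
            · intro i
              calc (⟦m.moveLeft i⟧:Game) + (k+2) • ⟦powHalf (p+1)⟧
                  ≤ ⟦a⟧ + (k+2) • ⟦powHalf (p+1)⟧ := add_le_add_left (hmL i) _
                _ = ⟦a⟧ + ⟦powHalf (p+1)⟧ + (k+1) • ⟦powHalf (p+1)⟧ := by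
                    rw [show (k+2) = (k+1)+1 from by omega, succ_nsmul]
                    abel
                _ < ⟦m⟧ + (k+1) • ⟦powHalf (p+1)⟧ := add_lt_add_left hmidσ _
                _ < ⟦y⟧ := hk1
            · intro j' hj'
              obtain rfl : j' = k+1 := by omega
              exact hk1
            · intro i
              exact hyR i (k+2)
          refine le_antisymm ?_ ?_
          · have := PGame.le_iff_game_le.1 hle1
            rwa [hformv] at this
          · have := PGame.le_iff_game_le.1 hle2
            rwa [hformv] at this
        have hkill : m₂ ≤ y + negs p (k+3) := by
          have hcalc : (⟦y⟧:Game) - (k+3) • ⟦powHalf (p+1)⟧ = ⟦m⟧ - ⟦powHalf (p+1)⟧ := by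
            rw [hyval, show (k+3) = (k+2)+1 from by omega]
            exact gsub_succ _ _ (k+2)
          apply le_add_negs
          · intro i
            rw [hcalc]
            calc (⟦m₂.moveLeft i⟧:Game) ≤ ⟦a⟧ := hm₂L i
              _ < ⟦m⟧ - ⟦powHalf (p+1)⟧ := by
                  rw [lt_sub_iff_add_lt]
                  exact hmidσ
          · intro i
            have h4 := hyR i (k+4)
            have hstep : (⟦m⟧:Game) + ⟦powHalf (p+1)⟧ < ⟦y.moveRight i⟧ - (k+3) • ⟦powHalf (p+1)⟧ := by
              rw [lt_sub_iff_add_lt]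
              calc (⟦m⟧:Game) + ⟦powHalf (p+1)⟧ + (k+3) • ⟦powHalf (p+1)⟧
                  = ⟦m⟧ + (k+4) • ⟦powHalf (p+1)⟧ := by
                    rw [show (k+4) = (k+3)+1 from by omega]
                    exact gadd_one_nsmul _ _ (k+3)
                _ < _ := h4
            refine lt_trans ?_ hstep
            rw [hm₂val]
            exact lt_trans hmidσ (lt_add_of_pos_right _ hpos)
          · intro j' hj'
            obtain rfl : j' = k+2 := by omega
            rw [hyval, add_sub_cancel_right, hm₂val]
            exact hmidσ
        have hh := PGame.le_iff_game_le.1 hkill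
        rw [quot_add, negs_val, hm₂val, hyval] at hh
        have hcalc2 : (⟦m⟧:Game) + (k+2) • ⟦powHalf (p+1)⟧ + -((k+3) • ⟦powHalf (p+1)⟧)
            = ⟦m⟧ - ⟦powHalf (p+1)⟧ := by
          rw [show (k+3) = (k+2)+1 from by omega]
          exact gsub_succ' _ _ (k+2)
        rw [hcalc2, le_sub_iff_add_le, add_assoc, hhq] at hh
        exact absurd hh hσγ.not_ge
      -- escape : any numeric value above σ + h is above the whole ladder
      have escape : ∀ r : PGame.{u}, r.Numeric →
          (⟦m⟧:Game) + 1 • ⟦powHalf (p+1)⟧ < ⟦r⟧ →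
          ∀ j : ℕ, (⟦m⟧:Game) + j • ⟦powHalf (p+1)⟧ < ⟦r⟧ := by
        intro r hrN hr1 j
        induction j with
        | zero =>
          rw [zero_nsmul, add_zero]
          calc (⟦m⟧:Game) < ⟦m⟧ + 1 • ⟦powHalf (p+1)⟧ :=
                lt_add_of_pos_right _ (nsmul_pos hpos one_ne_zero)
            _ < ⟦r⟧ := hr1
        | succ j IHj =>
          rcases game_lt_or_le (hformN (j+1)) hrN with hlt | hle
          · rw [hformv] at hlt; exact hlt
          · exfalso
            rw [hformv] at hle
            cases j with
            | zero =>
              refine absurd hle (LT.lt.not_ge ?_)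
              rw [show (0:ℕ)+1 = 1 from rfl]
              exact hr1
            | succ j' =>
              refine IND _ r rfl hrN j' IHj ?_
              rw [show j'+2 = j'+1+1 from by omega]
              exact hle
      -- the final contradiction : the minimal form just above σ
      obtain ⟨y₀, hy₀, hy₀min⟩ := exists_min_bd
        (fun y => y.Numeric ∧ (⟦m⟧:Game) < ⟦y⟧ ∧ (⟦y⟧:Game) ≤ ⟦m⟧ + 1 • ⟦powHalf (p+1)⟧)
        ⟨m₀, hm₀.1, by rw [hm₀val]; exact hσγ, by
          rw [hm₀val, one_nsmul]
          calc (⟦a⟧:Game) + ⟦powHalf p⟧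
              = (⟦a⟧ + ⟦powHalf (p+1)⟧) + ⟦powHalf (p+1)⟧ := by rw [← hhq]; abel
            _ ≤ ⟦m⟧ + ⟦powHalf (p+1)⟧ := add_le_add_left hlow _⟩
      have hy₀L : ∀ i, (⟦y₀.moveLeft i⟧:Game) ≤ ⟦m⟧ := by
        intro i
        rcases game_lt_or_le hm.1 (hy₀.1.moveLeft i) with hlt | hle
        · exfalso
          have hw : (y₀.moveLeft i).Numeric ∧ (⟦m⟧:Game) < ⟦y₀.moveLeft i⟧ ∧
              (⟦y₀.moveLeft i⟧:Game) ≤ ⟦m⟧ + 1 • ⟦powHalf (p+1)⟧ :=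
            ⟨hy₀.1.moveLeft i, hlt,
              le_trans (PGame.lt_iff_game_lt.1 (hy₀.1.moveLeft_lt i)).le hy₀.2.2⟩
          exact absurd (hy₀min _ hw) (not_le.2 (birthday_moveLeft_lt i))
        · exact hle
      have hy₀R : ∀ i (j : ℕ), (⟦m⟧:Game) + j • ⟦powHalf (p+1)⟧ < ⟦y₀.moveRight i⟧ := by
        intro i
        apply escape _ (hy₀.1.moveRight i)
        rcases game_lt_or_le (hformN 1) (hy₀.1.moveRight i) with hlt | hle
        · rw [hformv] at hlt; exact hlt
        · exfalso
          rw [hformv] at hle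
          have hw : (y₀.moveRight i).Numeric ∧ (⟦m⟧:Game) < ⟦y₀.moveRight i⟧ ∧
              (⟦y₀.moveRight i⟧:Game) ≤ ⟦m⟧ + 1 • ⟦powHalf (p+1)⟧ :=
            ⟨hy₀.1.moveRight i,
              lt_trans hy₀.2.1 (PGame.lt_iff_game_lt.1 (hy₀.1.lt_moveRight i)), hle⟩
          exact absurd (hy₀min _ hw) (not_le.2 (birthday_moveRight_lt i))
      rcases game_lt_or_le hy₀.1 hc₀N with hA | hBC
      · -- ⟦y₀⟧ < γ : contradiction with birthdays
        rw [hc₀v] at hA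
        have hyMid : Mid a ((⟦a⟧:Game)+⟦powHalf p⟧) y₀ := ⟨hy₀.1, lt_trans hm.2.1 hy₀.2.1, hA⟩
        have h1 : m.birthday ≤ y₀.birthday := hmmin _ hyMid
        have h2 : y₀.birthday ≤ m₀.birthday := hy₀min m₀ ⟨hm₀.1, by rw [hm₀val]; exact hσγ, by
          rw [hm₀val, one_nsmul]
          calc (⟦a⟧:Game) + ⟦powHalf p⟧
              = (⟦a⟧ + ⟦powHalf (p+1)⟧) + ⟦powHalf (p+1)⟧ := by rw [← hhq]; abel
            _ ≤ ⟦m⟧ + ⟦powHalf (p+1)⟧ := add_le_add_left hlow _⟩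
        exact absurd (le_trans h1 h2) (not_le.2 hbd01)
      · rw [hc₀v] at hBC
        rcases game_lt_or_le hc₀N hy₀.1 with hC | hB
        · -- γ < ⟦y₀⟧
          rw [hc₀v] at hC
          rcases game_lt_or_le hy₀.1 hb with hC1 | hC2
          · -- γ < ⟦y₀⟧ < b : then y₀ has the same value as ball a b, i.e. γ; contradiction
            have hle1 : ball a b ≤ y₀ := crossLe
              (fun i => lt_trans hm.2.1 hy₀.2.1)
              (fun j => by
                rw [hv]
                calc (⟦a⟧:Game)+⟦powHalf p⟧ < ⟦m⟧ + ⟦powHalf (p+1)⟧ := hmidσ'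
                  _ = ⟦m⟧ + 1 • ⟦powHalf (p+1)⟧ := by rw [one_nsmul]
                  _ < ⟦y₀.moveRight j⟧ := hy₀R j 1)
            have hle2 : y₀ ≤ ball a b := crossLe
              (fun i => lt_of_le_of_lt (hy₀L i) (by rw [hv]; exact hσγ))
              (fun j => hC1)
            have heq : (⟦y₀⟧ : Game) = ⟦a⟧+⟦powHalf p⟧ := by
              rw [← hv]
              exact le_antisymm (PGame.le_iff_game_le.1 hle2) (PGame.le_iff_game_le.1 hle1)
            rw [heq] at hC
            exact lt_irrefl _ hC
          · -- b ≤ ⟦y₀⟧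
            rcases game_lt_or_le hy₀.1 (hformN 1) with hC2a | hC2b
            · -- ⟦y₀⟧ < σ + h : kill with m
              rw [hformv] at hC2a
              have hkill : m ≤ y₀ + negs p 1 := by
                apply le_add_negs
                · intro i
                  rw [one_nsmul]
                  calc (⟦m.moveLeft i⟧:Game) ≤ ⟦a⟧ := hmL i
                    _ < ⟦y₀⟧ - ⟦powHalf (p+1)⟧ := by
                        rw [lt_sub_iff_add_lt]
                        calc (⟦a⟧:Game) + ⟦powHalf (p+1)⟧ < ⟦a⟧+⟦powHalf p⟧ := hmidγ
                          _ < ⟦b⟧ := hGb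
                          _ ≤ ⟦y₀⟧ := hC2
                · intro i
                  rw [one_nsmul, lt_sub_iff_add_lt]
                  calc (⟦m⟧:Game) + ⟦powHalf (p+1)⟧ = ⟦m⟧ + 1 • ⟦powHalf (p+1)⟧ := by rw [one_nsmul]
                    _ < ⟦m⟧ + 2 • ⟦powHalf (p+1)⟧ := gadd_nsmul_lt hpos _ (by omega)
                    _ < ⟦y₀.moveRight i⟧ := hy₀R i 2
                · intro j' hj'
                  obtain rfl : j' = 0 := by omega
                  rw [zero_nsmul, _root_.sub_zero]
                  calc (⟦m⟧:Game) < ⟦a⟧+⟦powHalf p⟧ := hσγ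
                    _ < ⟦b⟧ := hGb
                    _ ≤ ⟦y₀⟧ := hC2
              have hh := PGame.le_iff_game_le.1 hkill
              rw [quot_add, negs_val, one_nsmul] at hh
              have hsub : (⟦m⟧:Game) ≤ ⟦y₀⟧ - ⟦powHalf (p+1)⟧ := by
                rw [sub_eq_add_neg]
                exact hh
              have hcon : (⟦m⟧:Game) + 1 • ⟦powHalf (p+1)⟧ ≤ ⟦y₀⟧ := by
                rw [one_nsmul]
                exact le_sub_iff_add_le.1 hsub
              exact absurd hC2a hcon.not_gt
            · -- σ + h ≤ ⟦y₀⟧ : equality, kill with m₂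
              rw [hformv] at hC2b
              have hyeq : (⟦y₀⟧:Game) = ⟦m⟧ + 1 • ⟦powHalf (p+1)⟧ := le_antisymm hy₀.2.2 hC2b
              have hkill : m₂ ≤ y₀ + negs p 2 := by
                have hval2 : (⟦y₀⟧:Game) - 2 • ⟦powHalf (p+1)⟧ = ⟦m⟧ - ⟦powHalf (p+1)⟧ := by
                  rw [hyeq, one_nsmul, two_nsmul]
                  abel
                apply le_add_negs
                · intro i
                  rw [hval2]
                  calc (⟦m₂.moveLeft i⟧:Game) ≤ ⟦a⟧ := hm₂L i
                    _ < ⟦m⟧ - ⟦powHalf (p+1)⟧ := by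
                        rw [lt_sub_iff_add_lt]
                        exact hmidσ
                · intro i
                  rw [lt_sub_iff_add_lt, hm₂val]
                  calc (⟦a⟧:Game) + ⟦powHalf (p+1)⟧ + 2 • ⟦powHalf (p+1)⟧
                      < ⟦m⟧ + 2 • ⟦powHalf (p+1)⟧ := add_lt_add_left hmidσ _
                    _ < ⟦m⟧ + 4 • ⟦powHalf (p+1)⟧ := gadd_nsmul_lt hpos _ (by omega)
                    _ < ⟦y₀.moveRight i⟧ := hy₀R i 4
                · intro j' hj'
                  obtain rfl : j' = 1 := by omega
                  rw [hyeq, hm₂val, one_nsmul, add_sub_cancel_right]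
                  exact hmidσ
              have hh := PGame.le_iff_game_le.1 hkill
              rw [quot_add, negs_val, hm₂val, hyeq] at hh
              have hcalc3 : (⟦m⟧:Game) + 1 • ⟦powHalf (p+1)⟧ + -(2 • ⟦powHalf (p+1)⟧)
                  = ⟦m⟧ - ⟦powHalf (p+1)⟧ := by
                rw [one_nsmul, two_nsmul]
                abel
              rw [hcalc3, le_sub_iff_add_le, add_assoc, hhq] at hh
              exact absurd hh hσγ.not_ge
        · -- ⟦y₀⟧ = γ : kill with m
          rw [hc₀v] at hB
          have hyeq : (⟦y₀⟧:Game) = ⟦a⟧+⟦powHalf p⟧ := le_antisymm hB hBC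
          have hkill : m ≤ y₀ + negs p 1 := by
            apply le_add_negs
            · intro i
              rw [one_nsmul, hyeq]
              calc (⟦m.moveLeft i⟧:Game) ≤ ⟦a⟧ := hmL i
                _ < ⟦a⟧+⟦powHalf p⟧ - ⟦powHalf (p+1)⟧ := by
                    rw [lt_sub_iff_add_lt]
                    exact add_lt_add_right hlt1 _
            · intro i
              rw [one_nsmul, lt_sub_iff_add_lt]
              calc (⟦m⟧:Game) + ⟦powHalf (p+1)⟧ = ⟦m⟧ + 1 • ⟦powHalf (p+1)⟧ := by rw [one_nsmul]
                _ < ⟦m⟧ + 2 • ⟦powHalf (p+1)⟧ := gadd_nsmul_lt hpos _ (by omega)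
                _ < ⟦y₀.moveRight i⟧ := hy₀R i 2
            · intro j' hj'
              obtain rfl : j' = 0 := by omega
              rw [zero_nsmul, _root_.sub_zero, hyeq]
              exact hσγ
          have hh := PGame.le_iff_game_le.1 hkill
          rw [quot_add, negs_val, one_nsmul, hyeq] at hh
          have : (⟦m⟧:Game) ≤ ⟦a⟧ + ⟦powHalf (p+1)⟧ := by
            calc (⟦m⟧:Game) ≤ ⟦a⟧+⟦powHalf p⟧ + -⟦powHalf (p+1)⟧ := hh
              _ = ⟦a⟧ + ⟦powHalf (p+1)⟧ := by rw [← hhq]; abel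
          exact absurd this hmidσ.not_ge


theorem quot_powHalf_mono : ∀ (q d : ℕ), (⟦powHalf (q + d)⟧ : Game) ≤ ⟦powHalf q⟧
  | _, 0 => le_refl _
  | q, d+1 => le_trans (quot_powHalf_le (q+d)) (quot_powHalf_mono q d)

/-- The main induction on `k`. -/
theorem chain {a b : PGame.{u}} {p : ℕ} (ha : a.Numeric) (hb : b.Numeric)
    (hG : (ball a b).Numeric)
    (hv : (⟦ball a b⟧ : Game) = ⟦a⟧ + ⟦powHalf p⟧) :
    ∀ k : ℕ, (ordinalSum (ball a b) (-canonNat k)).Numeric ∧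
      (⟦ordinalSum (ball a b) (-canonNat k)⟧ : Game) = ⟦a⟧ + ⟦powHalf (p+k)⟧ ∧
      (∀ m : PGame.{u}, Mid a ((⟦a⟧:Game) + ⟦powHalf (p+k)⟧) m →
        (∀ y, Mid a ((⟦a⟧:Game) + ⟦powHalf (p+k)⟧) y → m.birthday ≤ y.birthday) →
        (⟦m⟧ : Game) = ⟦a⟧ + ⟦powHalf (p+k+1)⟧) := by
  have hab : a < b := hG.left_lt_right PUnit.unit PUnit.unit
  have hGb : (⟦a⟧ : Game) + ⟦powHalf p⟧ < ⟦b⟧ := by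
    have h1 : ball a b < b := hG.lt_moveRight PUnit.unit
    have h2 := PGame.lt_iff_game_lt.1 h1
    rwa [hv] at h2
  intro k
  induction k with
  | zero =>
    have hN : (ordinalSum (ball a b) (-canonNat 0)).Numeric := by
      refine Numeric.mk ?_ ?_ ?_
      · rintro (i | i) (j | j)
        · exact hab
        · exact PEmpty.elim j
        · exact PEmpty.elim i
        · exact PEmpty.elim i
      · rintro (i | i)
        · exact ha
        · exact PEmpty.elim i
      · rintro (j | j)
        · exact hb
        · exact PEmpty.elim j
    have hEq : (⟦ordinalSum (ball a b) (-canonNat 0)⟧ : Game) = ⟦ball a b⟧ := by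
      have h1 : ordinalSum (ball a b) (-canonNat 0) ≤ ball a b := by
        apply le_of_forall_lf
        · rintro (i | i)
          · exact moveLeft_lf (x := ball a b) PUnit.unit
          · exact PEmpty.elim i
        · intro j
          exact lf_of_moveRight_le (x := ordinalSum (ball a b) (-canonNat 0))
            (j := Sum.inl PUnit.unit) (le_refl b)
      have h2 : ball a b ≤ ordinalSum (ball a b) (-canonNat 0) := by
        apply le_of_forall_lf
        · intro i
          exact moveLeft_lf (x := ordinalSum (ball a b) (-canonNat 0)) (Sum.inl PUnit.unit)
        · rintro (j | j)
          · exact lf_of_moveRight_le (x := ball a b) (j := PUnit.unit) (le_refl b)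
          · exact PEmpty.elim j
      exact le_antisymm (PGame.le_iff_game_le.1 h1) (PGame.le_iff_game_le.1 h2)
    refine ⟨hN, by rw [hEq, hv, Nat.add_zero], ?_⟩
    intro m hm hmmin
    rw [Nat.add_zero] at hm hmmin
    have := crux_hard ha hb hG hv hm hmmin
    rwa [Nat.add_zero]
  | succ k IH =>
    obtain ⟨hN, hval, hcrux⟩ := IH
    have haT : (⟦a⟧:Game) < ⟦ordinalSum (ball a b) (-canonNat k)⟧ := by
      rw [hval]
      exact lt_add_of_pos_right _ (quot_powHalf_pos _)
    have haTp : a < ordinalSum (ball a b) (-canonNat k) := PGame.lt_iff_game_lt.2 haT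
    have hN' : (ordinalSum (ball a b) (-canonNat (k+1))).Numeric := by
      refine Numeric.mk ?_ ?_ ?_
      · rintro (i | i) (j | j)
        · exact hab
        · exact haTp
        · exact PEmpty.elim i
        · exact PEmpty.elim i
      · rintro (i | i)
        · exact ha
        · exact PEmpty.elim i
      · rintro (j | j)
        · exact hb
        · exact hN
    -- the minimal form in (a, value of T k)
    obtain ⟨m, hmm, hmmmin⟩ := exists_min_bd (Mid a ((⟦a⟧:Game) + ⟦powHalf (p+k)⟧))
      ⟨a + powHalf (p+k+1), ha.add (numeric_powHalf _), by
        rw [quot_add]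
        exact lt_add_of_pos_right _ (quot_powHalf_pos _), by
        rw [quot_add]
        exact add_lt_add_right (quot_powHalf_lt (p+k)) _⟩
    have hmval : (⟦m⟧:Game) = ⟦a⟧ + ⟦powHalf (p+k+1)⟧ := hcrux m hmm hmmmin
    have hmL := min_shape_left ha hmm hmmmin
    have hmR := min_shape_right ha hN hval hmm hmmmin
    -- pin the value of T (k+1)
    have hTlt : ordinalSum (ball a b) (-canonNat (k+1)) < ordinalSum (ball a b) (-canonNat k) :=
      hN'.lt_moveRight (Sum.inr PUnit.unit)
    have haT' : a < ordinalSum (ball a b) (-canonNat (k+1)) :=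
      hN'.moveLeft_lt (Sum.inl PUnit.unit)
    have hle1 : ordinalSum (ball a b) (-canonNat (k+1)) ≤ m := by
      apply le_of_forall_lf
      · rintro (i | i)
        · exact glt hmm.2.1
        · exact PEmpty.elim i
      · intro j
        apply glt
        calc (⟦ordinalSum (ball a b) (-canonNat (k+1))⟧ : Game)
            < ⟦ordinalSum (ball a b) (-canonNat k)⟧ := PGame.lt_iff_game_lt.1 hTlt
          _ = ⟦a⟧ + ⟦powHalf (p+k)⟧ := hval
          _ ≤ ⟦m.moveRight j⟧ := hmR j
    have hle2 : m ≤ ordinalSum (ball a b) (-canonNat (k+1)) := by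
      apply le_of_forall_lf
      · intro i
        apply glt
        exact lt_of_le_of_lt (hmL i) (PGame.lt_iff_game_lt.1 haT')
      · rintro (j | j)
        · apply glt
          show (⟦m⟧:Game) < ⟦b⟧
          rw [hmval]
          calc (⟦a⟧:Game) + ⟦powHalf (p+k+1)⟧ ≤ ⟦a⟧ + ⟦powHalf p⟧ := by
                refine add_le_add_right ?_ _
                rw [show p+k+1 = p+(k+1) from by omega]
                exact quot_powHalf_mono p (k+1)
            _ < ⟦b⟧ := hGb
        · apply glt
          show (⟦m⟧:Game) < ⟦ordinalSum (ball a b) (-canonNat k)⟧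
          rw [hmval, hval]
          exact add_lt_add_right (quot_powHalf_lt (p+k)) _
    have hTval : (⟦ordinalSum (ball a b) (-canonNat (k+1))⟧ : Game)
        = ⟦a⟧ + ⟦powHalf (p+(k+1))⟧ := by
      rw [show p+(k+1) = p+k+1 from by omega, ← hmval]
      exact le_antisymm (PGame.le_iff_game_le.1 hle1) (PGame.le_iff_game_le.1 hle2)
    refine ⟨hN', hTval, ?_⟩
    intro m' hm' hm'min
    have hfar : (⟦a⟧:Game) + ⟦powHalf (p+k+1)⟧ + ⟦powHalf (p+k+1+1)⟧
        ≤ ⟦ordinalSum (ball a b) (-canonNat k)⟧ := by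
      rw [hval, ← quot_powHalf_add_self (p+k), ← add_assoc]
      apply add_le_add_right
      exact quot_powHalf_le (p+k+1)
    have hm'2 : Mid a (⟦m⟧ : Game) m' := by
      rw [hmval, show p+k+1 = p+(k+1) from by omega]
      exact hm'
    have hm'min2 : ∀ y, Mid a (⟦m⟧ : Game) y → m'.birthday ≤ y.birthday := by
      intro y hy
      rw [hmval, show p+k+1 = p+(k+1) from by omega] at hy
      exact hm'min y hy
    have hmm2 : Mid a (⟦ordinalSum (ball a b) (-canonNat k)⟧ : Game) m := by
      rw [hval]; exact hmm
    have hmmmin2 : ∀ y, Mid a (⟦ordinalSum (ball a b) (-canonNat k)⟧ : Game) y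
        → m.birthday ≤ y.birthday := by
      intro y hy
      rw [hval] at hy
      exact hmmmin y hy
    have := crux_core ha hN hmm2 hmmmin2 hmval hfar hm'2 hm'min2
    rwa [show p+k+1+1 = p+(k+1)+1 from by omega] at this

end OrdSumAux

/-- For a ball `G ≅ ⟨a | b⟩` of numbers with `G − a = 1/2^p` as values, and any positive
integer `k`, with `−k` in canonical form: `G : (−k) = G − 1/2^p + 1/2^{p+k}`. -/
theorem ordinalSum_neg_int_value (a b : PGame) (ha : a.Numeric) (hb : b.Numeric)
    (hG : (ball a b).Numeric) (p : ℕ)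
    (hv : (⟦ball a b⟧ : Game) - ⟦a⟧ = ⟦powHalf p⟧) (k : ℕ) (hk : 0 < k) :
    (⟦ordinalSum (ball a b) (canonInt (-(k : ℤ)))⟧ : Game) =
      ⟦ball a b⟧ - ⟦powHalf p⟧ + ⟦powHalf (p + k)⟧ := by
  have hv' : (⟦ball a b⟧ : Game) = ⟦a⟧ + ⟦powHalf p⟧ := by
    rw [← hv]; abel
  have hcanon : canonInt (-(k : ℤ)) = -canonNat k := by
    rw [canonInt, if_neg (by omega : ¬ (0:ℤ) ≤ -(k : ℤ)), neg_neg, Int.toNat_natCast]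
  rw [hcanon, (OrdSumAux.chain ha hb hG hv' k).2.1, hv']
  abel
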